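/- arXiv:1803.09908 — 4 statements merged into one kernel-verified Lean document; each statement's English description precedes it below -/
import Mathlib

section
/- (Saito's criterion, valid over a field of arbitrary characteristic.) Let A be a central hyperplane arrangement of n hyperplanes in K^l over a field K, and let δ_1, …, δ_l ∈ D(A) be homogeneous vector fields, with δ_i = Σ_{j=1}^l f_{ij} ∂/∂x_j. Then the following are equivalent: (1) D(A) is a free S-module with basis δ_1, …, δ_l, i.e. D(A) = S·δ_1 ⊕ ⋯ ⊕ S·δ_l; (2) det(f_{ij})_{i,j} = c·Q(A) for some nonzero scalar c ∈ K; (3) δ_1, …, δ_l are linearly independent over S and Σ_{i=1}^l pdeg(δ_i) = n. -/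
open MvPolynomial

namespace HApaper

variable {K : Type*} [CommRing K] {l n : ℕ}

/-- The data of a central arrangement of `n` hyperplanes in `K^l`: `n` nonzero
homogeneous linear forms defining pairwise distinct hyperplanes. -/
structure IsCentralArrangement (α : Fin n → MvPolynomial (Fin l) K) : Prop where
  homog : ∀ i, (α i).IsHomogeneous 1
  nonzero : ∀ i, α i ≠ 0
  distinct : ∀ i j, i ≠ j → ∀ c : K, α i ≠ c • α j

/-- The defining polynomial `Q(A) = α_1 ⋯ α_n`. -/
noncomputable def defPoly (α : Fin n → MvPolynomial (Fin l) K) : MvPolynomial (Fin l) K :=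
  ∏ i, α i

/-- A polynomial vector field `δ = Σ_j f_j ∂/∂x_j` (encoded by its coefficient tuple
`(f_1, …, f_l)`) applied to a polynomial `g`, giving `Σ_j f_j ∂g/∂x_j`. -/
noncomputable def derApply (δ : Fin l → MvPolynomial (Fin l) K) (g : MvPolynomial (Fin l) K) :
    MvPolynomial (Fin l) K :=
  ∑ j, δ j * MvPolynomial.pderiv j g

lemma derApply_add (δ₁ δ₂ : Fin l → MvPolynomial (Fin l) K) (g : MvPolynomial (Fin l) K) :
    derApply (δ₁ + δ₂) g = derApply δ₁ g + derApply δ₂ g := by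
  simp [derApply, add_mul, Finset.sum_add_distrib]

lemma derApply_smul (c : MvPolynomial (Fin l) K) (δ : Fin l → MvPolynomial (Fin l) K)
    (g : MvPolynomial (Fin l) K) : derApply (c • δ) g = c * derApply δ g := by
  simp [derApply, Finset.mul_sum, mul_assoc]

/-- The module `D(A) = {δ ∈ Der | δ(α_i) ∈ (α_i)S for all i}` of logarithmic vector fields. -/
noncomputable def logDer (α : Fin n → MvPolynomial (Fin l) K) :
    Submodule (MvPolynomial (Fin l) K) (Fin l → MvPolynomial (Fin l) K) where
  carrier := {δ | ∀ i, α i ∣ derApply δ (α i)}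
  add_mem' := by
    intro a b ha hb i
    rw [derApply_add]
    exact dvd_add (ha i) (hb i)
  zero_mem' := by
    intro i
    simp [derApply]
  smul_mem' := by
    intro c δ hδ i
    rw [derApply_smul]
    exact Dvd.dvd.mul_left (hδ i) c

/-- A vector field is homogeneous of polynomial degree `d` if all its coefficients are
homogeneous polynomials of degree `d`. -/
def IsHomogVF (δ : Fin l → MvPolynomial (Fin l) K) (d : ℕ) : Prop :=
  ∀ j, (δ j).IsHomogeneous d

/-- `A` is free with exponents `(e_1, …, e_l)` if `D(A)` has a basis of homogeneous
vector fields of polynomial degrees `e_1, …, e_l`. -/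
def IsFreeWithExponents (α : Fin n → MvPolynomial (Fin l) K) (e : Fin l → ℕ) : Prop :=
  ∃ b : Module.Basis (Fin l) (MvPolynomial (Fin l) K) (logDer α),
    ∀ i, IsHomogVF ((b i : Fin l → MvPolynomial (Fin l) K)) (e i)

/-- `A` is free if `D(A)` is a free module over the polynomial ring. -/
def IsFree (α : Fin n → MvPolynomial (Fin l) K) : Prop :=
  Module.Free (MvPolynomial (Fin l) K) (logDer α)

/-! ### Auxiliary lemmas for Saito's criterion -/

section Aux

set_option linter.unusedSectionVars false

lemma mem_logDer_iff {α : Fin n → MvPolynomial (Fin l) K}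
    {δ : Fin l → MvPolynomial (Fin l) K} :
    δ ∈ logDer α ↔ ∀ i, α i ∣ derApply δ (α i) := Iff.rfl

section Degrees

variable {σ : Type*}

lemma Finsupp_degree_add (a b : σ →₀ ℕ) : (a + b).degree = a.degree + b.degree := by
  simp [Finsupp.degree_eq_weight_one, map_add]

lemma coeff_eq_zero_of_sup_lt {p : MvPolynomial σ K} {d : σ →₀ ℕ}
    (h : p.support.sup Finsupp.degree < d.degree) : coeff d p = 0 := by
  by_contra hc
  exact absurd (Finset.le_sup (f := Finsupp.degree) (mem_support_iff.2 hc)) (not_le.2 h)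

lemma coeff_eq_zero_of_lt_inf {p : MvPolynomial σ K} {d : σ →₀ ℕ} (hne : p.support.Nonempty)
    (h : d.degree < p.support.inf' hne Finsupp.degree) : coeff d p = 0 := by
  by_contra hc
  exact absurd (Finset.inf'_le Finsupp.degree (mem_support_iff.2 hc)) (not_le.2 h)

lemma degree_eq_of_coeff_ne_zero {p : MvPolynomial σ K} {N : ℕ} (h : p.IsHomogeneous N)
    {d : σ →₀ ℕ} (hd : coeff d p ≠ 0) : d.degree = N := by
  by_contra hne
  exact hd (h.coeff_eq_zero hne)

lemma isHomogeneous_of_degree_support {p : MvPolynomial σ K} {N : ℕ}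
    (h : ∀ d ∈ p.support, Finsupp.degree d = N) : p.IsHomogeneous N := by
  intro d hd
  have := h d (mem_support_iff.2 hd)
  rw [Finsupp.degree_eq_weight_one] at this
  exact this

/-- In a polynomial ring over a domain, both factors of a nonzero homogeneous
polynomial are homogeneous. -/
lemma isHomogeneous_mul_factors [IsDomain K] {p q : MvPolynomial σ K} {N : ℕ}
    (hp : p ≠ 0) (hq : q ≠ 0) (h : (p * q).IsHomogeneous N) :
    ∃ a b, a + b = N ∧ p.IsHomogeneous a ∧ q.IsHomogeneous b := by
  classical
  have hps : p.support.Nonempty := MvPolynomial.support_nonempty.mpr hp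
  have hqs : q.support.Nonempty := MvPolynomial.support_nonempty.mpr hq
  set Sp := p.support.sup Finsupp.degree with hSp
  set Sq := q.support.sup Finsupp.degree with hSq
  set Ip := p.support.inf' hps Finsupp.degree with hIp
  set Iq := q.support.inf' hqs Finsupp.degree with hIq
  have htop : Sp + Sq = N := by
    set tp := homogeneousComponent Sp p with htp
    set tq := homogeneousComponent Sq q with htq
    have htp0 : tp ≠ 0 := by
      obtain ⟨d, hd, hde⟩ := Finset.exists_mem_eq_sup p.support hps Finsupp.degree
      have : coeff d tp = coeff d p := by
        rw [htp, coeff_homogeneousComponent, if_pos hde.symm]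
      intro h0
      apply mem_support_iff.1 hd
      rw [← this, h0, coeff_zero]
    have htq0 : tq ≠ 0 := by
      obtain ⟨d, hd, hde⟩ := Finset.exists_mem_eq_sup q.support hqs Finsupp.degree
      have : coeff d tq = coeff d q := by
        rw [htq, coeff_homogeneousComponent, if_pos hde.symm]
      intro h0
      apply mem_support_iff.1 hd
      rw [← this, h0, coeff_zero]
    have hhom : (tp * tq).IsHomogeneous (Sp + Sq) :=
      (homogeneousComponent_isHomogeneous Sp p).mul (homogeneousComponent_isHomogeneous Sq q)
    obtain ⟨e, he⟩ : ∃ e, coeff e (tp * tq) ≠ 0 := by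
      by_contra hc
      push_neg at hc
      exact mul_ne_zero htp0 htq0 (MvPolynomial.ext _ _ fun e => by simpa using hc e)
    have hedeg : e.degree = Sp + Sq := degree_eq_of_coeff_ne_zero hhom he
    have hco : coeff e (p * q) = coeff e (tp * tq) := by
      rw [coeff_mul, coeff_mul]
      refine Finset.sum_congr rfl ?_
      rintro ⟨x1, x2⟩ hx
      have hxe : x1 + x2 = e := Finset.HasAntidiagonal.mem_antidiagonal.1 hx
      have hdsum : x1.degree + x2.degree = Sp + Sq := by
        rw [← Finsupp_degree_add, hxe, hedeg]
      simp only
      by_cases h1 : x1.degree = Sp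
      · have h2 : x2.degree = Sq := by omega
        rw [htp, htq, coeff_homogeneousComponent, coeff_homogeneousComponent,
          if_pos h1, if_pos h2]
      · rcases lt_or_gt_of_ne h1 with hlt | hgt
        · have h2 : Sq < x2.degree := by omega
          have e1 : coeff x2 q = 0 := coeff_eq_zero_of_sup_lt h2
          have e2 : coeff x2 (homogeneousComponent Sq q) = 0 := by
            rw [coeff_homogeneousComponent, if_neg (by omega)]
          rw [htq, e1, e2, mul_zero, mul_zero]
        · have e1 : coeff x1 p = 0 := coeff_eq_zero_of_sup_lt hgt
          have e2 : coeff x1 (homogeneousComponent Sp p) = 0 := by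
            rw [coeff_homogeneousComponent, if_neg h1]
          rw [htp, e1, e2, zero_mul, zero_mul]
    have : coeff e (p * q) ≠ 0 := by rw [hco]; exact he
    rw [← hedeg]
    exact (degree_eq_of_coeff_ne_zero h this) ▸ rfl
  have hbot : Ip + Iq = N := by
    set tp := homogeneousComponent Ip p with htp
    set tq := homogeneousComponent Iq q with htq
    have htp0 : tp ≠ 0 := by
      obtain ⟨d, hd, hde⟩ := Finset.exists_mem_eq_inf' hps Finsupp.degree
      have : coeff d tp = coeff d p := by
        rw [htp, coeff_homogeneousComponent, if_pos hde.symm]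
      intro h0
      apply mem_support_iff.1 hd
      rw [← this, h0, coeff_zero]
    have htq0 : tq ≠ 0 := by
      obtain ⟨d, hd, hde⟩ := Finset.exists_mem_eq_inf' hqs Finsupp.degree
      have : coeff d tq = coeff d q := by
        rw [htq, coeff_homogeneousComponent, if_pos hde.symm]
      intro h0
      apply mem_support_iff.1 hd
      rw [← this, h0, coeff_zero]
    have hhom : (tp * tq).IsHomogeneous (Ip + Iq) :=
      (homogeneousComponent_isHomogeneous Ip p).mul (homogeneousComponent_isHomogeneous Iq q)
    obtain ⟨e, he⟩ : ∃ e, coeff e (tp * tq) ≠ 0 := by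
      by_contra hc
      push_neg at hc
      exact mul_ne_zero htp0 htq0 (MvPolynomial.ext _ _ fun e => by simpa using hc e)
    have hedeg : e.degree = Ip + Iq := degree_eq_of_coeff_ne_zero hhom he
    have hco : coeff e (p * q) = coeff e (tp * tq) := by
      rw [coeff_mul, coeff_mul]
      refine Finset.sum_congr rfl ?_
      rintro ⟨x1, x2⟩ hx
      have hxe : x1 + x2 = e := Finset.HasAntidiagonal.mem_antidiagonal.1 hx
      have hdsum : x1.degree + x2.degree = Ip + Iq := by
        rw [← Finsupp_degree_add, hxe, hedeg]
      simp only
      by_cases h1 : x1.degree = Ip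
      · have h2 : x2.degree = Iq := by omega
        rw [htp, htq, coeff_homogeneousComponent, coeff_homogeneousComponent,
          if_pos h1, if_pos h2]
      · rcases lt_or_gt_of_ne h1 with hlt | hgt
        · have e1 : coeff x1 p = 0 := coeff_eq_zero_of_lt_inf hps hlt
          have e2 : coeff x1 (homogeneousComponent Ip p) = 0 := by
            rw [coeff_homogeneousComponent, if_neg h1]
          rw [htp, e1, e2, zero_mul, zero_mul]
        · have h2 : x2.degree < Iq := by omega
          have e1 : coeff x2 q = 0 := coeff_eq_zero_of_lt_inf hqs h2
          have e2 : coeff x2 (homogeneousComponent Iq q) = 0 := by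
            rw [coeff_homogeneousComponent, if_neg (by omega)]
          rw [htq, e1, e2, mul_zero, mul_zero]
    have : coeff e (p * q) ≠ 0 := by rw [hco]; exact he
    rw [← hedeg]
    exact (degree_eq_of_coeff_ne_zero h this) ▸ rfl
  obtain ⟨dp, hdp⟩ := hps
  obtain ⟨dq, hdq⟩ := hqs
  have hple : Ip ≤ Sp :=
    le_trans (Finset.inf'_le Finsupp.degree hdp) (Finset.le_sup (f := Finsupp.degree) hdp)
  have hqle : Iq ≤ Sq :=
    le_trans (Finset.inf'_le Finsupp.degree hdq) (Finset.le_sup (f := Finsupp.degree) hdq)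
  have hpe : Ip = Sp := by omega
  have hqe : Iq = Sq := by omega
  refine ⟨Sp, Sq, htop, isHomogeneous_of_degree_support ?_, isHomogeneous_of_degree_support ?_⟩
  · intro d hd
    have h1 := Finset.le_sup (f := Finsupp.degree) hd
    have h2 := Finset.inf'_le Finsupp.degree hd (s := p.support)
    omega
  · intro d hd
    have h1 := Finset.le_sup (f := Finsupp.degree) hd
    have h2 := Finset.inf'_le Finsupp.degree hd (s := q.support)
    omega

lemma degree_one_classify {d : σ →₀ ℕ} (h : Finsupp.degree d = 1) :
    ∃ j, d = Finsupp.single j 1 := by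
  classical
  have hs : d.support.Nonempty := by
    by_contra hc
    rw [Finset.not_nonempty_iff_eq_empty] at hc
    rw [Finsupp.degree_apply, hc] at h
    simp at h
  obtain ⟨j, hj⟩ := hs
  refine ⟨j, ?_⟩
  have hdj1 : d j = 1 := by
    have h1 : 1 ≤ d j := Nat.one_le_iff_ne_zero.2 (Finsupp.mem_support_iff.1 hj)
    have h2 : d j ≤ 1 :=
      h ▸ Finset.single_le_sum (f := fun i => d i) (fun _ _ => Nat.zero_le _) hj
    omega
  ext i
  by_cases hij : i = j
  · subst hij; simp [hdj1]
  · rw [Finsupp.single_apply, if_neg (by exact fun hc => hij hc.symm)]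
    by_contra hc
    have hi : i ∈ d.support := Finsupp.mem_support_iff.2 hc
    have hi' : i ∈ d.support.erase j := Finset.mem_erase.2 ⟨hij, hi⟩
    have h2 : 1 ≤ ∑ m ∈ d.support.erase j, d m :=
      le_trans (Nat.one_le_iff_ne_zero.2 hc)
        (Finset.single_le_sum (f := fun i => d i) (fun _ _ => Nat.zero_le _) hi')
    have h3 : d j + ∑ m ∈ d.support.erase j, d m = 1 := by
      rw [Finset.add_sum_erase _ _ hj]; exact h
    omega

variable [Fintype σ]

lemma linear_rep {p : MvPolynomial σ K} (hp : p.IsHomogeneous 1) :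
    p = ∑ j, C (coeff (Finsupp.single j 1) p) * X j := by
  classical
  ext d
  rw [coeff_sum]
  by_cases hd : ∃ j₀, d = Finsupp.single j₀ 1
  · obtain ⟨j₀, rfl⟩ := hd
    rw [Finset.sum_eq_single j₀]
    · simp [coeff_C_mul, coeff_X']
    · intro j _ hne
      rw [coeff_C_mul, coeff_X', if_neg, mul_zero]
      intro hc
      exact hne (Finsupp.single_left_injective one_ne_zero hc)
    · simp
  · have h1 : coeff d p = 0 := by
      apply hp.coeff_eq_zero
      intro hc
      exact hd (degree_one_classify hc)
    rw [h1]
    refine (Finset.sum_eq_zero ?_).symm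
    intro j _
    rw [coeff_C_mul, coeff_X', if_neg (fun hc => hd ⟨j, hc.symm⟩), mul_zero]

lemma pderiv_linear {p : MvPolynomial σ K} (hp : p.IsHomogeneous 1) (j : σ) :
    pderiv j p = C (coeff (Finsupp.single j 1) p) := by
  classical
  conv_lhs => rw [linear_rep hp]
  rw [map_sum, Finset.sum_eq_single j]
  · rw [pderiv_C_mul, pderiv_X_self, mul_one]
  · intro i _ hne
    rw [pderiv_C_mul, pderiv_X_of_ne hne, mul_zero]
  · simp

lemma exists_coeff_single_ne_zero {p : MvPolynomial σ K} (hp : p.IsHomogeneous 1) (h0 : p ≠ 0) :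
    ∃ j, coeff (Finsupp.single j 1) p ≠ 0 := by
  by_contra hc
  push_neg at hc
  apply h0
  rw [linear_rep hp]
  exact Finset.sum_eq_zero fun j _ => by rw [hc j, map_zero, zero_mul]

lemma isHomogeneous_zero_eq_C {p : MvPolynomial σ K} (hp : p.IsHomogeneous 0) :
    p = C (coeff 0 p) := by
  classical
  ext d
  by_cases hd : d = 0
  · subst hd; simp
  · rw [hp.coeff_eq_zero (by rwa [Ne, Finsupp.degree_eq_zero_iff]), coeff_C,
      if_neg (by exact fun hc => hd hc.symm)]

end Degrees

end Aux


section FieldAux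

set_option linter.unusedSectionVars false

variable {K : Type*} [Field K] {l n : ℕ} {σ : Type*} [Fintype σ]

lemma isUnit_C_of_ne_zero {c : K} (hc : c ≠ 0) : IsUnit (C c : MvPolynomial σ K) :=
  (isUnit_iff_ne_zero.2 hc).map (C : K →+* MvPolynomial σ K)

lemma isUnit_iff_C {g : MvPolynomial σ K} : IsUnit g ↔ ∃ c : K, c ≠ 0 ∧ g = C c := by
  constructor
  · intro hg
    obtain ⟨u, rfl⟩ := hg
    have h1 : (u : MvPolynomial σ K) * (↑u⁻¹ : MvPolynomial σ K) = 1 := u.mul_inv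
    have hu0 : (u : MvPolynomial σ K) ≠ 0 := left_ne_zero_of_mul_eq_one h1
    have hv0 : (↑u⁻¹ : MvPolynomial σ K) ≠ 0 := right_ne_zero_of_mul_eq_one h1
    have hhom : ((u : MvPolynomial σ K) * (↑u⁻¹ : MvPolynomial σ K)).IsHomogeneous 0 := by
      rw [h1]; exact isHomogeneous_one σ K
    obtain ⟨a, b, hab, hu, hv⟩ := isHomogeneous_mul_factors hu0 hv0 hhom
    have ha : a = 0 := by omega
    subst ha
    refine ⟨coeff 0 (u : MvPolynomial σ K), ?_, isHomogeneous_zero_eq_C hu⟩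
    intro h0
    apply hu0
    rw [isHomogeneous_zero_eq_C hu, h0, map_zero]
  · rintro ⟨c, hc, rfl⟩
    exact isUnit_C_of_ne_zero hc

lemma irreducible_of_linear {p : MvPolynomial σ K} (hp : p.IsHomogeneous 1) (h0 : p ≠ 0) :
    Irreducible p := by
  constructor
  · intro hu
    obtain ⟨c, hc, rfl⟩ := isUnit_iff_C.1 hu
    have h01 : (0 : ℕ) = 1 := (isHomogeneous_C σ c).inj_right hp h0
    exact absurd h01 (by norm_num)
  · intro f g hfg
    have hf0 : f ≠ 0 := by
      rintro rfl
      rw [zero_mul] at hfg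
      exact h0 hfg
    have hg0 : g ≠ 0 := by
      rintro rfl
      rw [mul_zero] at hfg
      exact h0 hfg
    obtain ⟨a, b, hab, hf, hg⟩ := isHomogeneous_mul_factors hf0 hg0 (hfg ▸ hp)
    rcases Nat.eq_zero_or_pos a with ha | ha
    · subst ha
      left
      refine isUnit_iff_C.2 ⟨coeff 0 f, ?_, isHomogeneous_zero_eq_C hf⟩
      intro hc
      apply hf0
      rw [isHomogeneous_zero_eq_C hf, hc, map_zero]
    · have hb : b = 0 := by omega
      subst hb
      right
      refine isUnit_iff_C.2 ⟨coeff 0 g, ?_, isHomogeneous_zero_eq_C hg⟩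
      intro hc
      apply hg0
      rw [isHomogeneous_zero_eq_C hg, hc, map_zero]

lemma prime_of_linear {p : MvPolynomial σ K} (hp : p.IsHomogeneous 1) (h0 : p ≠ 0) :
    Prime p :=
  (UniqueFactorizationMonoid.irreducible_iff_prime).1 (irreducible_of_linear hp h0)

lemma not_dvd_of_not_smul {p q : MvPolynomial σ K} (hp : p.IsHomogeneous 1) (hp0 : p ≠ 0)
    (hq : q.IsHomogeneous 1) (hq0 : q ≠ 0) (h : ∀ c : K, q ≠ c • p) : ¬ p ∣ q := by
  rintro ⟨t, ht⟩
  have ht0 : t ≠ 0 := by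
    rintro rfl
    rw [mul_zero] at ht
    exact hq0 ht
  obtain ⟨a, b, hab, hpa, htb⟩ := isHomogeneous_mul_factors hp0 ht0 (ht ▸ hq)
  have ha : a = 1 := hpa.inj_right hp hp0
  have hb : b = 0 := by omega
  subst hb
  have htC : t = C (coeff 0 t) := isHomogeneous_zero_eq_C htb
  apply h (coeff 0 t)
  rw [ht, smul_eq_C_mul, mul_comm, ← htC]

end FieldAux


section MatrixAux

set_option linter.unusedSectionVars false

variable {K : Type*} [Field K] {l n : ℕ}

lemma derApply_linear {α : Fin n → MvPolynomial (Fin l) K} (hA : IsCentralArrangement α)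
    (w : Fin l → MvPolynomial (Fin l) K) (i : Fin n) :
    derApply w (α i) = ∑ m, w m * C (coeff (Finsupp.single m 1) (α i)) := by
  simp [derApply, pderiv_linear (hA.homog i)]

lemma alpha_dvd_det {α : Fin n → MvPolynomial (Fin l) K} (hA : IsCentralArrangement α)
    (W : Matrix (Fin l) (Fin l) (MvPolynomial (Fin l) K)) (hW : ∀ m, W m ∈ logDer α)
    (k : Fin n) : α k ∣ W.det := by
  classical
  obtain ⟨j₀, hj₀⟩ := exists_coeff_single_ne_zero (hA.homog k) (hA.nonzero k)
  set a : Fin l → MvPolynomial (Fin l) K :=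
    fun m => C (coeff (Finsupp.single m 1) (α k)) with ha
  have hder : ∀ m, derApply (W m) (α k) = W.mulVec a m := by
    intro m
    rw [derApply_linear hA]
    rfl
  have hdvd : ∀ m, α k ∣ W.mulVec a m := fun m => hder m ▸ (hW m k)
  choose u hu using hdvd
  have hWa : W.mulVec a = α k • u := funext fun m => by rw [hu m]; rfl
  have key : W.det • a = α k • W.adjugate.mulVec u := by
    have h1 : W.adjugate.mulVec (W.mulVec a) = W.det • a := by
      rw [Matrix.mulVec_mulVec, Matrix.adjugate_mul, Matrix.smul_mulVec,
        Matrix.one_mulVec]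
    rw [← h1, hWa, Matrix.mulVec_smul]
  have key' : W.det * a j₀ = α k * W.adjugate.mulVec u j₀ := congrFun key j₀
  have hd1 : α k ∣ W.det * C (coeff (Finsupp.single j₀ 1) (α k)) := ⟨_, key'⟩
  have hd2 : α k ∣ W.det * C (coeff (Finsupp.single j₀ 1) (α k)) *
      C (coeff (Finsupp.single j₀ 1) (α k))⁻¹ := hd1.mul_right _
  rwa [mul_assoc, ← C_mul, mul_inv_cancel₀ hj₀, C_1, mul_one] at hd2

lemma prod_primes_dvd {ι : Type*} {R : Type*} [CommMonoidWithZero R]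
    (s : Finset ι) (f : ι → R) (hp : ∀ i ∈ s, Prime (f i))
    (hnd : ∀ i ∈ s, ∀ j ∈ s, i ≠ j → ¬ f i ∣ f j) :
    ∀ g : R, (∀ i ∈ s, f i ∣ g) → (∏ i ∈ s, f i) ∣ g := by
  classical
  induction s using Finset.induction_on with
  | empty => intro g _; simp
  | @insert k s hk ih =>
    intro g hg
    obtain ⟨g', hg'⟩ := hg k (Finset.mem_insert_self k s)
    have hstep : ∀ i ∈ s, f i ∣ g' := by
      intro i hi
      have hik : i ≠ k := fun hc => hk (hc ▸ hi)
      have h1 : f i ∣ f k * g' := hg' ▸ hg i (Finset.mem_insert_of_mem hi)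
      rcases (hp i (Finset.mem_insert_of_mem hi)).dvd_or_dvd h1 with h2 | h2
      · exact absurd h2 (hnd i (Finset.mem_insert_of_mem hi) k (Finset.mem_insert_self k s) hik)
      · exact h2
    have hih := ih (fun i hi => hp i (Finset.mem_insert_of_mem hi))
      (fun i hi j hj hij => hnd i (Finset.mem_insert_of_mem hi) j (Finset.mem_insert_of_mem hj) hij)
      g' hstep
    rw [Finset.prod_insert hk, hg']
    exact mul_dvd_mul_left (f k) hih

lemma not_dvd_alpha {α : Fin n → MvPolynomial (Fin l) K} (hA : IsCentralArrangement α)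
    {i j : Fin n} (hij : i ≠ j) : ¬ α i ∣ α j :=
  not_dvd_of_not_smul (hA.homog i) (hA.nonzero i) (hA.homog j) (hA.nonzero j)
    (fun c => hA.distinct j i (fun hc => hij hc.symm) c)

lemma defPoly_dvd_det {α : Fin n → MvPolynomial (Fin l) K} (hA : IsCentralArrangement α)
    (W : Matrix (Fin l) (Fin l) (MvPolynomial (Fin l) K)) (hW : ∀ m, W m ∈ logDer α) :
    defPoly α ∣ W.det := by
  refine prod_primes_dvd Finset.univ α
    (fun i _ => prime_of_linear (hA.homog i) (hA.nonzero i))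
    (fun i _ j _ hij => not_dvd_alpha hA hij) W.det
    (fun i _ => alpha_dvd_det hA W hW i)

lemma det_isHomogeneous (M : Matrix (Fin l) (Fin l) (MvPolynomial (Fin l) K)) (e : Fin l → ℕ)
    (h : ∀ i j, (M i j).IsHomogeneous (e i)) : M.det.IsHomogeneous (∑ i, e i) := by
  rw [Matrix.det_apply]
  apply IsHomogeneous.sum
  intro σ _
  have hprod : (∏ i, M (σ i) i).IsHomogeneous (∑ i, e (σ i)) :=
    IsHomogeneous.prod _ _ _ (fun i _ => h (σ i) i)
  have hsum : ∑ i, e (σ i) = ∑ i, e i := Equiv.sum_comp σ e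
  rw [hsum] at hprod
  rcases Int.units_eq_one_or (Equiv.Perm.sign σ) with hs | hs <;> rw [hs]
  · simpa using hprod
  · simpa [Units.smul_def] using hprod.neg

lemma linearIndependent_iff_det_ne_zero {δ : Fin l → Fin l → MvPolynomial (Fin l) K} :
    LinearIndependent (MvPolynomial (Fin l) K) δ ↔
      (Matrix.of fun i j => δ i j).det ≠ 0 := by
  classical
  rw [Fintype.linearIndependent_iff]
  constructor
  · intro h hdet
    obtain ⟨v, hv0, hv⟩ := (Matrix.exists_vecMul_eq_zero_iff).2 hdet
    apply hv0
    have hsum : ∑ i, v i • δ i = 0 := by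
      funext j
      have := congrFun hv j
      simpa [Matrix.vecMul, dotProduct, Finset.sum_apply] using this
    funext i
    exact h v hsum i
  · intro hdet g hg i
    by_contra hgi
    apply hdet
    refine (Matrix.exists_vecMul_eq_zero_iff).1 ⟨g, fun hc => hgi (by rw [hc]; rfl), ?_⟩
    funext j
    have := congrFun hg j
    simpa [Matrix.vecMul, dotProduct, Finset.sum_apply] using this

end MatrixAux


/-- **Saito's criterion** (valid over a field of arbitrary characteristic).
Given homogeneous `δ_1, …, δ_l ∈ D(A)` with `pdeg δ_i = e_i`, the following are
equivalent: (1) `D(A)` is free with basis `δ_1, …, δ_l`;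
(2) `det (f_{ij}) = c · Q(A)` for some nonzero `c ∈ K`;
(3) `δ_1, …, δ_l` are linearly independent over `S` and `Σ pdeg δ_i = n`. -/
theorem saito_criterion {K : Type*} [Field K] {l n : ℕ}
    (α : Fin n → MvPolynomial (Fin l) K) (hA : IsCentralArrangement α)
    (δ : Fin l → Fin l → MvPolynomial (Fin l) K) (hδ : ∀ i, δ i ∈ logDer α)
    (e : Fin l → ℕ) (hhom : ∀ i, IsHomogVF (δ i) (e i)) :
    ((∃ b : Module.Basis (Fin l) (MvPolynomial (Fin l) K) (logDer α),
        ∀ i, (b i : Fin l → MvPolynomial (Fin l) K) = δ i) ↔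
      (∃ c : K, c ≠ 0 ∧
        (Matrix.of fun i j => δ i j).det = MvPolynomial.C c * defPoly α)) ∧
    ((∃ c : K, c ≠ 0 ∧
        (Matrix.of fun i j => δ i j).det = MvPolynomial.C c * defPoly α) ↔
      (LinearIndependent (MvPolynomial (Fin l) K) δ ∧ ∑ i, e i = n)) := by
  classical
  set M : Matrix (Fin l) (Fin l) (MvPolynomial (Fin l) K) := Matrix.of fun i j => δ i j with hM
  have hQ0 : defPoly α ≠ 0 := by
    rw [defPoly]
    exact Finset.prod_ne_zero_iff.2 fun i _ => hA.nonzero i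
  have hQhom : (defPoly α).IsHomogeneous n := by
    have := IsHomogeneous.prod Finset.univ α (fun _ => 1) (fun i _ => hA.homog i)
    simpa [defPoly] using this
  have hdethom : M.det.IsHomogeneous (∑ i, e i) :=
    det_isHomogeneous M e (fun i j => hhom i j)
  have hQdvd : defPoly α ∣ M.det := defPoly_dvd_det hA M hδ
  have hLI : LinearIndependent (MvPolynomial (Fin l) K) δ ↔ M.det ≠ 0 :=
    linearIndependent_iff_det_ne_zero
  -- (2) → (3)
  have h23 : (∃ c : K, c ≠ 0 ∧ M.det = C c * defPoly α) →
      LinearIndependent (MvPolynomial (Fin l) K) δ ∧ ∑ i, e i = n := by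
    rintro ⟨c, hc, hdet⟩
    have hdet0 : M.det ≠ 0 := by
      rw [hdet]
      exact mul_ne_zero (fun h => hc (by simpa using h)) hQ0
    refine ⟨hLI.2 hdet0, ?_⟩
    have h2 : M.det.IsHomogeneous n := by
      rw [hdet]
      exact hQhom.C_mul c
    exact hdethom.inj_right h2 hdet0
  -- (3) → (2)
  have h32 : (LinearIndependent (MvPolynomial (Fin l) K) δ ∧ ∑ i, e i = n) →
      ∃ c : K, c ≠ 0 ∧ M.det = C c * defPoly α := by
    rintro ⟨hli, hsum⟩
    have hdet0 : M.det ≠ 0 := hLI.1 hli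
    obtain ⟨g, hg⟩ := hQdvd
    have hg0 : g ≠ 0 := by
      rintro rfl
      rw [mul_zero] at hg
      exact hdet0 hg
    have hdethom' : M.det.IsHomogeneous n := hsum ▸ hdethom
    have hQg : (defPoly α * g).IsHomogeneous n := hg ▸ hdethom'
    obtain ⟨a, b, hab, hQa, hgb⟩ := isHomogeneous_mul_factors hQ0 hg0 hQg
    have ha : a = n := hQa.inj_right hQhom hQ0
    have hb : b = 0 := by omega
    subst hb
    have hgC : g = C (coeff 0 g) := isHomogeneous_zero_eq_C hgb
    refine ⟨coeff 0 g, ?_, ?_⟩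
    · intro h0
      apply hg0
      rw [hgC, h0, map_zero]
    · rw [hg, mul_comm, ← hgC]
  -- (2) → (1)
  have h21 : (∃ c : K, c ≠ 0 ∧ M.det = C c * defPoly α) →
      ∃ b : Module.Basis (Fin l) (MvPolynomial (Fin l) K) (logDer α),
        ∀ i, (b i : Fin l → MvPolynomial (Fin l) K) = δ i := by
    rintro ⟨c, hc, hdet⟩
    have hdet0 : M.det ≠ 0 := by
      rw [hdet]
      exact mul_ne_zero (fun h => hc (by simpa using h)) hQ0
    have hli : LinearIndependent (MvPolynomial (Fin l) K) δ := hLI.2 hdet0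
    have hspan : ∀ w ∈ logDer α, ∃ g : Fin l → MvPolynomial (Fin l) K,
        w = ∑ i, g i • δ i := by
      intro w hw
      have hQd : ∀ i, M.det ∣ (Matrix.cramer M.transpose w) i := by
        intro i
        rw [Matrix.cramer_transpose_apply]
        have hrows : ∀ m, (M.updateRow i w) m ∈ logDer α := by
          intro m
          by_cases hmi : m = i
          · subst hmi
            rw [Matrix.updateRow_self]
            exact hw
          · rw [Matrix.updateRow_ne hmi]
            exact hδ m
        obtain ⟨t, ht⟩ := defPoly_dvd_det hA _ hrows
        rw [hdet]
        exact ⟨C c⁻¹ * t, by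
          rw [ht, show C c * defPoly α * (C c⁻¹ * t) = (C c * C c⁻¹) * (defPoly α * t) from by
            ring, ← C_mul, mul_inv_cancel₀ hc, C_1, one_mul]⟩
      choose g hgdef using hQd
      refine ⟨g, ?_⟩
      have h1 : M.transpose.mulVec (Matrix.cramer M.transpose w) = M.transpose.det • w := Matrix.mulVec_cramer M.transpose w
      funext j
      have h2 := congrFun h1 j
      rw [Matrix.det_transpose] at h2
      have h3 : ∑ i, M i j * (M.det * g i) = M.det * w j := by
        simpa [Matrix.mulVec, dotProduct, Matrix.transpose_apply, hgdef,
          Pi.smul_apply, smul_eq_mul] using h2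
      have h4 : M.det * (∑ i, g i * δ i j) = M.det * w j := by
        rw [← h3, Finset.mul_sum]
        exact Finset.sum_congr rfl fun i _ => by simp only [hM, Matrix.of_apply]; ring
      have h5 := mul_left_cancel₀ hdet0 h4
      rw [Finset.sum_apply]
      simp only [Pi.smul_apply, smul_eq_mul]
      exact h5.symm
    set v : Fin l → logDer α := fun i => ⟨δ i, hδ i⟩ with hv
    have hliv : LinearIndependent (MvPolynomial (Fin l) K) v :=
      LinearIndependent.of_comp (logDer α).subtype hli
    have hsp : ⊤ ≤ Submodule.span (MvPolynomial (Fin l) K) (Set.range v) := by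
      rintro ⟨w, hw⟩ -
      obtain ⟨g, hgw⟩ := hspan w hw
      have hco : (⟨w, hw⟩ : logDer α) = ∑ i, g i • v i := by
        apply Subtype.ext
        show w = _
        rw [hgw]
        simp [hv]
      have hmem : (∑ i, g i • v i) ∈ Submodule.span (MvPolynomial (Fin l) K) (Set.range v) :=
        Submodule.sum_mem _ fun i _ =>
          Submodule.smul_mem _ _ (Submodule.subset_span ⟨i, rfl⟩)
      exact hco ▸ hmem
    exact ⟨Module.Basis.mk hliv hsp, fun i => by rw [Module.Basis.mk_apply]⟩
  -- (1) → (2)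
  have h12 : (∃ b : Module.Basis (Fin l) (MvPolynomial (Fin l) K) (logDer α),
        ∀ i, (b i : Fin l → MvPolynomial (Fin l) K) = δ i) →
      ∃ c : K, c ≠ 0 ∧ M.det = C c * defPoly α := by
    rintro ⟨b, hb⟩
    have hli : LinearIndependent (MvPolynomial (Fin l) K) δ := by
      have h1 := b.linearIndependent.map' (logDer α).subtype (Submodule.ker_subtype _)
      have h2 : ((logDer α).subtype ∘ b) = δ := funext fun i => hb i
      rwa [h2] at h1
    have hdet0 : M.det ≠ 0 := hLI.1 hli
    obtain ⟨g, hgdet⟩ := hQdvd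
    have hg0 : g ≠ 0 := fun hcg => hdet0 (by rw [hgdet, hcg, mul_zero])
    have hfact : ∀ W : Matrix (Fin l) (Fin l) (MvPolynomial (Fin l) K),
        (∀ m, W m ∈ logDer α) → M.det ∣ W.det := by
      intro W hW
      have hWrow : ∀ m, W m = ∑ i, b.repr ⟨W m, hW m⟩ i • δ i := by
        intro m
        have h2 : (⟨W m, hW m⟩ : logDer α) = ∑ i, b.repr ⟨W m, hW m⟩ i • b i :=
          (b.sum_repr _).symm
        calc W m = ((⟨W m, hW m⟩ : logDer α) : Fin l → MvPolynomial (Fin l) K) := rfl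
          _ = ((∑ i, b.repr ⟨W m, hW m⟩ i • b i : logDer α) : Fin l → MvPolynomial (Fin l) K) :=
              by rw [← h2]
          _ = ∑ i, b.repr ⟨W m, hW m⟩ i • ((b i : logDer α) : Fin l → MvPolynomial (Fin l) K) :=
              by rw [Submodule.coe_sum]; simp only [Submodule.coe_smul]
          _ = ∑ i, b.repr ⟨W m, hW m⟩ i • δ i := by simp [hb]
      have hWPM : W = (Matrix.of fun m i => b.repr ⟨W m, hW m⟩ i) * M := by
        refine Matrix.ext fun m j => ?_
        rw [Matrix.mul_apply]
        have := congrFun (hWrow m) j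
        simpa [Finset.sum_apply, hM] using this
      rw [hWPM, Matrix.det_mul]
      exact dvd_mul_left _ _
    have hgunit : IsUnit g := by
      rcases Nat.eq_zero_or_pos n with hn0 | hn
      · have hone : ∀ m, (1 : Matrix (Fin l) (Fin l) (MvPolynomial (Fin l) K)) m ∈ logDer α := by
          intro m
          rw [mem_logDer_iff]
          intro i
          exact absurd i.2 (by omega)
        have h1 : M.det ∣ 1 := by simpa using hfact 1 hone
        exact isUnit_of_dvd_one ((Dvd.intro_left _ hgdet.symm).trans h1)
      · by_contra hgu
        obtain ⟨p, hirr, hpd⟩ := WfDvdMonoid.exists_irreducible_factor hgu hg0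
        have hpp : Prime p := UniqueFactorizationMonoid.irreducible_iff_prime.1 hirr
        have hex : ∀ k : Fin n, ∃ i, i ≠ k ∧ p ∣ α i := by
          intro k
          obtain ⟨j₀, hj₀⟩ := exists_coeff_single_ne_zero (hA.homog k) (hA.nonzero k)
          set a : Fin l → K := fun m => coeff (Finsupp.single m 1) (α k) with ha
          set Q' : MvPolynomial (Fin l) K := ∏ i ∈ Finset.univ.erase k, α i with hQ'
          have hQQ' : defPoly α = α k * Q' := by
            rw [defPoly, ← Finset.mul_prod_erase _ _ (Finset.mem_univ k)]
          have hQ'0 : Q' ≠ 0 := Finset.prod_ne_zero_iff.2 fun i _ => hA.nonzero i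
          have hQ'dvd : ∀ i, i ≠ k → α i ∣ Q' := fun i hi =>
            Finset.dvd_prod_of_mem α (Finset.mem_erase.2 ⟨hi, Finset.mem_univ i⟩)
          set N : Matrix (Fin l) (Fin l) (MvPolynomial (Fin l) K) := Matrix.of fun m m' =>
            if m = j₀ then (if m' = j₀ then α k else 0)
            else (if m' = m then C (a j₀) else if m' = j₀ then - C (a m) else 0) with hN
          set W : Matrix (Fin l) (Fin l) (MvPolynomial (Fin l) K) :=
            Matrix.of fun m m' => Q' * N m m' with hW
          have hWrows : ∀ m, W m ∈ logDer α := by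
            intro m
            rw [mem_logDer_iff]
            intro i
            rw [derApply_linear hA]
            by_cases him : i = k
            · rw [him]
              by_cases hmj : m = j₀
              · rw [hmj]
                have hsum : ∑ m', W j₀ m' * C (coeff (Finsupp.single m' 1) (α k))
                    = Q' * α k * C (coeff (Finsupp.single j₀ 1) (α k)) := by
                  rw [Finset.sum_eq_single j₀]
                  · simp [hW, hN]
                  · intro m' _ hm'
                    simp [hW, hN, hm']
                  · simp
                rw [hsum]
                exact ((dvd_mul_left (α k) Q').mul_right _)
              · have hjm : ¬ j₀ = m := fun hc => hmj hc.symm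
                have hsum : ∑ m', W m m' * C (coeff (Finsupp.single m' 1) (α k))
                    = Q' * C (a j₀) * C (a m) + Q' * (- C (a m)) * C (a j₀) := by
                  rw [← Finset.add_sum_erase _ _ (Finset.mem_univ m)]
                  congr 1
                  · simp [hW, hN, hmj, hjm, ha]
                  · rw [Finset.sum_eq_single_of_mem j₀
                      (Finset.mem_erase.2 ⟨fun hc => hmj hc.symm, Finset.mem_univ j₀⟩)]
                    · simp [hW, hN, hmj, hjm, ha]
                    · intro m' hm' hm'j
                      have hm'm : m' ≠ m := (Finset.mem_erase.1 hm').1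
                      simp [hW, hN, hmj, hm'j, hm'm]
                rw [hsum, show Q' * C (a j₀) * C (a m) + Q' * (- C (a m)) * C (a j₀) = 0 from
                  by ring]
                exact dvd_zero _
            · have hfac : ∑ m', W m m' * C (coeff (Finsupp.single m' 1) (α i))
                  = Q' * ∑ m', N m m' * C (coeff (Finsupp.single m' 1) (α i)) := by
                rw [Finset.mul_sum]
                exact Finset.sum_congr rfl fun m' _ => by simp [hW, mul_assoc]
              rw [hfac]
              exact ((hQ'dvd i him).mul_right _)
          have hNdet : N.det = α k * C (a j₀) ^ (l - 1) := by
            rw [Matrix.det_apply, Finset.sum_eq_single (1 : Equiv.Perm (Fin l))]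
            · rw [Equiv.Perm.sign_one, one_smul]
              rw [show (∏ i, N ((1 : Equiv.Perm (Fin l)) i) i) = ∏ i, N i i from rfl]
              rw [← Finset.mul_prod_erase _ _ (Finset.mem_univ j₀)]
              have h1 : N j₀ j₀ = α k := by simp [hN]
              have h2 : ∀ i ∈ Finset.univ.erase j₀, N i i = C (a j₀) := by
                intro i hi
                simp [hN, (Finset.mem_erase.1 hi).1]
              rw [h1, Finset.prod_congr rfl h2, Finset.prod_const,
                Finset.card_erase_of_mem (Finset.mem_univ j₀), Finset.card_univ,
                Fintype.card_fin]
            · intro σ _ hσ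
              have hfix : ∃ i', i' ≠ j₀ ∧ σ i' ≠ i' := by
                by_cases hj : σ j₀ = j₀
                · obtain ⟨i, hi⟩ : ∃ i, σ i ≠ i := by
                    by_contra hcon
                    push_neg at hcon
                    exact hσ (Equiv.ext hcon)
                  exact ⟨i, fun hci => hi (by rw [hci]; exact hj), hi⟩
                · have hkey : σ⁻¹ j₀ ≠ j₀ := by
                    intro hci
                    apply hj
                    have hcg := congrArg σ hci
                    rw [show σ (σ⁻¹ j₀) = j₀ from Equiv.apply_symm_apply σ j₀] at hcg
                    exact hcg.symm
                  refine ⟨σ⁻¹ j₀, hkey, ?_⟩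
                  rw [show σ (σ⁻¹ j₀) = j₀ from Equiv.apply_symm_apply σ j₀]
                  exact fun hci => hkey hci.symm
              obtain ⟨i', hi'j, hi's⟩ := hfix
              have hzero : N (σ i') i' = 0 := by
                by_cases hr : σ i' = j₀
                · rw [hr]
                  simp [hN, hi'j]
                · have : ¬ i' = σ i' := fun hci => hi's hci.symm
                  simp [hN, hr, hi'j, this]
              rw [Finset.prod_eq_zero (f := fun j => N (σ j) j) (Finset.mem_univ i') hzero, smul_zero]
            · intro hno
              exact absurd (Finset.mem_univ _) hno
          have hWdet : W.det = Q' ^ l * (α k * C (a j₀) ^ (l - 1)) := by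
            have hWsm : W = Q' • N := by
              refine Matrix.ext fun m m' => ?_
              simp [hW, Matrix.smul_apply, smul_eq_mul]
            rw [hWsm, Matrix.det_smul, hNdet, Fintype.card_fin]
          have hdvdW : M.det ∣ W.det := hfact W hWrows
          have hdvd2 : α k * Q' * g ∣ Q' ^ l * (α k * C (a j₀) ^ (l - 1)) := by
            have h0 := hdvdW
            rw [hgdet, hQQ', hWdet] at h0
            exact h0
          have hlpos : 0 < l := j₀.pos
          have hrw : Q' ^ l * (α k * C (a j₀) ^ (l - 1))
              = (α k * Q') * (Q' ^ (l - 1) * C (a j₀) ^ (l - 1)) := by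
            have hpow : Q' ^ l = Q' * Q' ^ (l - 1) := by
              rw [← pow_succ']
              congr 1
              omega
            rw [hpow]
            ring
          rw [hrw] at hdvd2
          have hdvd4 : g ∣ Q' ^ (l - 1) * C (a j₀) ^ (l - 1) :=
            (mul_dvd_mul_iff_left (mul_ne_zero (hA.nonzero k) hQ'0)).1 hdvd2
          have hpd2 : p ∣ Q' ^ (l - 1) * C (a j₀) ^ (l - 1) := hpd.trans hdvd4
          rcases hpp.dvd_or_dvd hpd2 with hcase | hcase
          · have hpQ' : p ∣ Q' := hpp.dvd_of_dvd_pow hcase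
            obtain ⟨i, hi, hpi⟩ := hpp.exists_mem_finset_dvd hpQ'
            exact ⟨i, (Finset.mem_erase.1 hi).1, hpi⟩
          · exact absurd (isUnit_of_dvd_unit hcase ((isUnit_C_of_ne_zero hj₀).pow _))
              hpp.not_unit
        obtain ⟨i₁, hne₁, hd₁⟩ := hex ⟨0, hn⟩
        obtain ⟨i₂, hne₂, hd₂⟩ := hex i₁
        obtain ⟨t, ht⟩ := hd₁
        rcases (irreducible_of_linear (hA.homog i₁) (hA.nonzero i₁)).isUnit_or_isUnit ht
          with hcase | hcase
        · exact hpp.not_unit hcase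
        · obtain ⟨u, rfl⟩ := hcase
          have hap : α i₁ ∣ p := ⟨(↑u⁻¹ : MvPolynomial (Fin l) K), by
            rw [ht, mul_assoc, Units.mul_inv, mul_one]⟩
          exact not_dvd_alpha hA (fun hc => hne₂ hc.symm) (hap.trans hd₂)
    obtain ⟨cg, hcg, hgC⟩ := isUnit_iff_C.1 hgunit
    exact ⟨cg, hcg, by rw [hgdet, hgC, mul_comm]⟩
  exact ⟨⟨h12, h21⟩, ⟨h23, h32⟩⟩

end HApaper
end

section
/- Let I be an ideal of R = Z[x_1,…,x_l]. Then the set of prime numbers p that are zero divisors on R/I (i.e., such that there exists f ∈ R with f ∉ I and pf ∈ I) is finite. -/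
namespace HApaper

/-- For any ideal `I` of `ℤ[x_1,…,x_l]`, only finitely many prime numbers are zero
divisors on `R/I`, i.e. admit an `f ∉ I` with `p·f ∈ I`. -/
theorem finitely_many_zero_divisor_primes (l : ℕ) (I : Ideal (MvPolynomial (Fin l) ℤ)) :
    {p : ℕ | p.Prime ∧ ∃ f : MvPolynomial (Fin l) ℤ,
      f ∉ I ∧ (p : MvPolynomial (Fin l) ℤ) * f ∈ I}.Finite := by
  classical
  set R := MvPolynomial (Fin l) ℤ
  obtain ⟨s, hs, hs'⟩ : ∃ s : Finset (Ideal R), s.inf id = I ∧ ∀ ⦃J⦄, J ∈ s → Ideal.IsPrimary J :=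
    Submodule.isLasker R R I
  have hsub : {p : ℕ | p.Prime ∧ ∃ f : R, f ∉ I ∧ (p : R) * f ∈ I} ⊆
      ⋃ J ∈ s, {p : ℕ | p.Prime ∧ (p : R) ∈ (J : Ideal R).radical} := by
    rintro p ⟨hp, f, hf, hpf⟩
    -- find a component J with f ∉ J
    have : ∃ J ∈ s, f ∉ (J : Ideal R) := by
      by_contra h
      push_neg at h
      exact hf (hs ▸ (Submodule.mem_finsetInf).2 (fun J hJ => h J hJ))
    obtain ⟨J, hJ, hfJ⟩ := this
    have hpfJ : (p : R) * f ∈ J := by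
      have := hs ▸ hpf
      exact (Submodule.mem_finsetInf).1 this J hJ
    rw [mul_comm] at hpfJ
    have hJp := (Ideal.isPrimary_iff.1 (hs' hJ)).2 hpfJ
    rcases hJp with h | h
    · exact absurd h hfJ
    · exact Set.mem_biUnion hJ ⟨hp, h⟩
  refine Set.Finite.subset ?_ hsub
  refine Set.Finite.biUnion s.finite_toSet ?_
  intro J hJ
  -- the set of primes in the radical of a primary ideal has at most one element
  have hrad : (J : Ideal R).radical.IsPrime := Ideal.isPrime_radical (hs' hJ)
  refine Set.Finite.subset (Set.finite_singleton
    (sInf {p : ℕ | p.Prime ∧ (p : R) ∈ (J : Ideal R).radical})) ?_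
  intro p hp
  have hq : sInf {p : ℕ | p.Prime ∧ (p : R) ∈ (J : Ideal R).radical}
      ∈ {p : ℕ | p.Prime ∧ (p : R) ∈ (J : Ideal R).radical} :=
    Nat.sInf_mem ⟨p, hp⟩
  set q := sInf {p : ℕ | p.Prime ∧ (p : R) ∈ (J : Ideal R).radical}
  by_contra hne
  have hne' : p ≠ q := hne
  -- p and q are distinct primes, both in the prime ideal radical J: contradiction
  have hcop : Nat.Coprime p q := (Nat.coprime_primes hp.1 hq.1).2 hne'
  obtain ⟨a, b, hab⟩ : ∃ a b : ℤ, a * p + b * q = 1 := by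
    refine ⟨Nat.gcdA p q, Nat.gcdB p q, ?_⟩
    have := Nat.gcd_eq_gcd_ab p q
    rw [hcop.gcd_eq_one] at this
    push_cast at this
    linarith [this]
  have h1 : (1 : R) ∈ (J : Ideal R).radical := by
    have : ((a * p + b * q : ℤ) : R) ∈ (J : Ideal R).radical := by
      push_cast
      exact Ideal.add_mem _ (Ideal.mul_mem_left _ _ hp.2) (Ideal.mul_mem_left _ _ hq.2)
    rwa [hab] at this
  exact hrad.ne_top ((Ideal.eq_top_iff_one _).2 h1)
end HApaper
end

section
/- Let I be a nonzero ideal of R = Z[x_1,…,x_l] and σ a term ordering on R. Then there exists a minimal strong σ-Gröbner basis of I. -/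
namespace HApaper

/-- A term ordering on the monomials of `ℤ[x_1,…,x_l]`: a linear order on the
exponent vectors which has `1` as least monomial and is compatible with
multiplication of monomials. -/
structure TermOrder (l : ℕ) where
  lin : LinearOrder (Fin l →₀ ℕ)
  zero_le : ∀ m, lin.le 0 m
  add_le_add_right : ∀ a b c, lin.le a b → lin.le (a + c) (b + c)

/-- The leading monomial `LM_σ(f)` of a polynomial (junk value `0` for `f = 0`). -/
noncomputable def TermOrder.lm {l : ℕ} (σ : TermOrder l) (f : MvPolynomial (Fin l) ℤ) :
    Fin l →₀ ℕ :=
  letI := σ.lin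
  WithBot.unbotD 0 f.support.max

/-- The leading coefficient `LC_σ(f)`. -/
noncomputable def TermOrder.lc {l : ℕ} (σ : TermOrder l) (f : MvPolynomial (Fin l) ℤ) : ℤ :=
  MvPolynomial.coeff (σ.lm f) f

/-- The leading term `LT_σ(f) = LC_σ(f)·x^{LM_σ(f)}`, as an element of `ℤ[x_1,…,x_l]`. -/
noncomputable def TermOrder.lt {l : ℕ} (σ : TermOrder l) (f : MvPolynomial (Fin l) ℤ) :
    MvPolynomial (Fin l) ℤ :=
  MvPolynomial.monomial (σ.lm f) (σ.lc f)

/-- `G` is a minimal strong `σ`-Gröbner basis of `I` if: its elements are nonzero,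
it generates `I`, the leading term of every nonzero element of `I` is divisible by the
leading term of some element of `G`, and no leading term of an element of `G` divides
the leading term of another element of `G`. -/
def IsMinimalStrongGroebnerBasis {l : ℕ} (σ : TermOrder l)
    (I : Ideal (MvPolynomial (Fin l) ℤ)) (G : Finset (MvPolynomial (Fin l) ℤ)) : Prop :=
  (∀ g ∈ G, g ≠ 0) ∧
  Ideal.span (G : Set (MvPolynomial (Fin l) ℤ)) = I ∧
  (∀ f ∈ I, f ≠ 0 → ∃ g ∈ G, σ.lt g ∣ σ.lt f) ∧
  (∀ g ∈ G, ∀ g' ∈ G, g ≠ g' → ¬ σ.lt g ∣ σ.lt g')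

section Aux
open MvPolynomial

variable {l : ℕ} (σ : TermOrder l)

lemma lm_mem_support {f : MvPolynomial (Fin l) ℤ} (hf : f ≠ 0) : σ.lm f ∈ f.support := by
  letI := σ.lin
  have h : f.support.Nonempty := by
    rw [Finset.nonempty_iff_ne_empty]
    simpa [MvPolynomial.support_eq_empty] using hf
  obtain ⟨a, ha⟩ := Finset.max_of_nonempty h
  have := Finset.mem_of_max ha
  simpa [TermOrder.lm, ha] using this

lemma le_lm_of_mem_support {f : MvPolynomial (Fin l) ℤ} {m : Fin l →₀ ℕ}
    (hm : m ∈ f.support) : σ.lin.le m (σ.lm f) := by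
  letI := σ.lin
  have h := Finset.le_max hm
  have hf : f ≠ 0 := by
    intro h0; rw [h0] at hm; simp at hm
  obtain ⟨a, ha⟩ := Finset.max_of_nonempty ⟨m, hm⟩
  rw [ha] at h
  simpa [TermOrder.lm, ha] using h

lemma coeff_eq_zero_of_lm_lt {f : MvPolynomial (Fin l) ℤ} {m : Fin l →₀ ℕ}
    (hm : σ.lin.lt (σ.lm f) m) : MvPolynomial.coeff m f = 0 := by
  by_contra h
  have h1 : σ.lin.le m (σ.lm f) := le_lm_of_mem_support σ (by simpa [MvPolynomial.mem_support_iff] using h)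
  exact ((σ.lin.lt_iff_le_not_ge _ _).1 hm).2 h1

lemma lc_ne_zero {f : MvPolynomial (Fin l) ℤ} (hf : f ≠ 0) : σ.lc f ≠ 0 := by
  have := lm_mem_support σ hf
  simpa [TermOrder.lc, MvPolynomial.mem_support_iff] using this

lemma lm_eq_of {f : MvPolynomial (Fin l) ℤ} {m : Fin l →₀ ℕ}
    (h1 : MvPolynomial.coeff m f ≠ 0)
    (h2 : ∀ m', σ.lin.lt m m' → MvPolynomial.coeff m' f = 0) : σ.lm f = m := by
  letI := σ.lin
  have hf : f ≠ 0 := by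
    intro h0; rw [h0] at h1; simp at h1
  have hm : m ∈ f.support := by simpa [MvPolynomial.mem_support_iff] using h1
  have h3 := le_lm_of_mem_support σ hm
  rcases σ.lin.le_total (σ.lm f) m with h4 | h4
  · exact σ.lin.le_antisymm _ _ h4 h3
  · rcases ((σ.lin.lt_iff_le_not_ge (σ.lm f) m).symm : _ ↔ _) with _
    by_cases he : σ.lm f = m
    · exact he
    · have hlt : σ.lin.lt m (σ.lm f) := (σ.lin.lt_iff_le_not_ge _ _).2 ⟨h4, fun hc => he (σ.lin.le_antisymm _ _ hc h4)⟩
      exact absurd (h2 _ hlt) (lc_ne_zero σ hf)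


lemma sigma_le_of_le {m m' : Fin l →₀ ℕ} (h : m ≤ m') : σ.lin.le m m' := by
  have h1 := σ.add_le_add_right 0 (m' - m) m (σ.zero_le _)
  rwa [zero_add, tsub_add_cancel_of_le h] at h1

lemma coeff_monomial_mul_eq_zero {d : Fin l →₀ ℕ} {c : ℤ} {g : MvPolynomial (Fin l) ℤ}
    {m : Fin l →₀ ℕ} (hm : σ.lin.lt (d + σ.lm g) m) :
    MvPolynomial.coeff m (MvPolynomial.monomial d c * g) = 0 := by
  classical
  rw [MvPolynomial.coeff_mul]
  apply Finset.sum_eq_zero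
  rintro ⟨u, v⟩ hx
  rw [Finset.HasAntidiagonal.mem_antidiagonal] at hx
  rw [MvPolynomial.coeff_monomial]
  by_cases hu : d = u
  · subst hu
    simp only [if_pos rfl]
    by_cases hv : MvPolynomial.coeff v g = 0
    · rw [hv, mul_zero]
    · exfalso
      have h1 : σ.lin.le v (σ.lm g) :=
        le_lm_of_mem_support σ (by simpa [MvPolynomial.mem_support_iff] using hv)
      have h2 : σ.lin.le (v + d) (σ.lm g + d) := σ.add_le_add_right _ _ _ h1
      rw [add_comm v d, add_comm (σ.lm g) d] at h2
      rw [hx] at h2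
      exact ((σ.lin.lt_iff_le_not_ge _ _).1 hm).2 h2
  · rw [if_neg hu, zero_mul]

lemma lm_monomial_mul {d : Fin l →₀ ℕ} {c : ℤ} {g : MvPolynomial (Fin l) ℤ}
    (hc : c ≠ 0) (hg : g ≠ 0) :
    σ.lm (MvPolynomial.monomial d c * g) = d + σ.lm g ∧
    σ.lc (MvPolynomial.monomial d c * g) = c * σ.lc g := by
  have hco : MvPolynomial.coeff (d + σ.lm g) (MvPolynomial.monomial d c * g) = c * σ.lc g := by
    rw [MvPolynomial.coeff_monomial_mul]
    rfl
  have hlm : σ.lm (MvPolynomial.monomial d c * g) = d + σ.lm g := by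
    apply lm_eq_of σ
    · rw [hco]
      exact mul_ne_zero hc (lc_ne_zero σ hg)
    · intro m' hm'
      exact coeff_monomial_mul_eq_zero σ hm'
  refine ⟨hlm, ?_⟩
  rw [TermOrder.lc, hlm, hco]

lemma monomial_dvd_monomial {m n : Fin l →₀ ℕ} {a b : ℤ} (hmn : m ≤ n) (hab : a ∣ b) :
    (MvPolynomial.monomial m a : MvPolynomial (Fin l) ℤ) ∣ MvPolynomial.monomial n b := by
  obtain ⟨c, rfl⟩ := hab
  exact ⟨MvPolynomial.monomial (n - m) c, by
    rw [MvPolynomial.monomial_mul, add_tsub_cancel_of_le hmn]⟩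

lemma dvd_of_monomial_dvd_monomial {m n : Fin l →₀ ℕ} {a b : ℤ} (hb : b ≠ 0)
    (h : (MvPolynomial.monomial m a : MvPolynomial (Fin l) ℤ) ∣ MvPolynomial.monomial n b) :
    m ≤ n ∧ a ∣ b := by
  classical
  obtain ⟨c, hc⟩ := h
  have key : ∀ k : Fin l →₀ ℕ, MvPolynomial.coeff k (MvPolynomial.monomial m a * c) ≠ 0 → m ≤ k := by
    intro k hk
    rw [MvPolynomial.coeff_mul] at hk
    obtain ⟨⟨u, v⟩, hx, hne⟩ := Finset.exists_ne_zero_of_sum_ne_zero hk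
    rw [Finset.HasAntidiagonal.mem_antidiagonal] at hx
    rw [MvPolynomial.coeff_monomial] at hne
    by_cases hu : m = u
    · subst hu; rw [← hx]; exact le_self_add
    · rw [if_neg hu, zero_mul] at hne; exact absurd rfl hne
  have hbn : MvPolynomial.coeff n (MvPolynomial.monomial n b : MvPolynomial (Fin l) ℤ) = b := by
    simp [MvPolynomial.coeff_monomial]
  have hmn : m ≤ n := by
    apply key
    rw [← hc, hbn]
    exact hb
  refine ⟨hmn, ?_⟩
  have h2 : MvPolynomial.coeff (m + (n - m)) (MvPolynomial.monomial m a * c) = a * MvPolynomial.coeff (n - m) c :=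
    MvPolynomial.coeff_monomial_mul _ _ _ _
  rw [add_tsub_cancel_of_le hmn, ← hc, hbn] at h2
  exact ⟨_, h2⟩

lemma sigma_wf : WellFounded σ.lin.lt := by
  rw [RelEmbedding.wellFounded_iff_isEmpty]
  constructor
  intro e
  obtain ⟨i, j, hij, hle⟩ := wellQuasiOrdered_le (fun n => e n)
  have h1 : σ.lin.le (e i) (e j) := sigma_le_of_le σ hle
  have h2 : σ.lin.lt (e j) (e i) := e.map_rel_iff.2 hij
  exact ((σ.lin.lt_iff_le_not_ge _ _).1 h2).2 h1

open MvPolynomial in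
/-- The ideal of leading coefficients of elements of `I` with leading monomial `m`. -/
def coefIdeal (I : Ideal (MvPolynomial (Fin l) ℤ)) (m : Fin l →₀ ℕ) : Ideal ℤ where
  carrier := {c | c = 0 ∨ ∃ f ∈ I, f ≠ 0 ∧ σ.lm f = m ∧ σ.lc f = c}
  zero_mem' := Or.inl rfl
  add_mem' := by
    rintro a b (rfl | ⟨f, hfI, hf0, hflm, hflc⟩) hb
    · simpa using hb
    rcases hb with rfl | ⟨g, hgI, hg0, hglm, hglc⟩
    · simpa using Or.inr ⟨f, hfI, hf0, hflm, hflc⟩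
    by_cases hab : a + b = 0
    · exact Or.inl hab
    right
    refine ⟨f + g, I.add_mem hfI hgI, ?_, ?_, ?_⟩
    all_goals {
      have hco : coeff m (f + g) = a + b := by
        rw [coeff_add, ← hflm] at *
        rw [← hflc, ← hglc, TermOrder.lc, TermOrder.lc, hflm, ← hglm]
      have hhi : ∀ m', σ.lin.lt m m' → coeff m' (f + g) = 0 := by
        intro m' hm'
        rw [coeff_add, coeff_eq_zero_of_lm_lt σ (hflm ▸ hm'), coeff_eq_zero_of_lm_lt σ (hglm ▸ hm'), add_zero]
      have hne : f + g ≠ 0 := fun h => hab (by rw [← hco, h, coeff_zero])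
      have hlm : σ.lm (f + g) = m := lm_eq_of σ (hco ▸ hab) hhi
      first
        | exact hne
        | exact hlm
        | (show σ.lc (f+g) = a + b; rw [TermOrder.lc, hlm, hco])
    }
  smul_mem' := by
    rintro c a (rfl | ⟨f, hfI, hf0, hflm, hflc⟩)
    · exact Or.inl (by simp)
    by_cases hc : c = 0
    · exact Or.inl (by simp [hc])
    right
    refine ⟨c • f, (by rw [MvPolynomial.smul_eq_C_mul]; exact I.mul_mem_left _ hfI), ?_, ?_, ?_⟩
    all_goals {
      have hco : coeff m (c • f) = c * a := by
        rw [coeff_smul, ← hflc, TermOrder.lc, hflm]; rfl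
      have hcane : c * a ≠ 0 := mul_ne_zero hc (hflc ▸ lc_ne_zero σ hf0)
      have hhi : ∀ m', σ.lin.lt m m' → coeff m' (c • f) = 0 := by
        intro m' hm'
        rw [coeff_smul, coeff_eq_zero_of_lm_lt σ (hflm ▸ hm'), smul_zero]
      have hne : c • f ≠ 0 := fun h => hcane (by rw [← hco, h, coeff_zero])
      have hlm : σ.lm (c • f) = m := lm_eq_of σ (hco ▸ hcane) hhi
      first
        | exact hne
        | exact hlm
        | (show σ.lc (c • f) = c • a; rw [TermOrder.lc, hlm, hco]; rfl)
    }

lemma coefIdeal_mono (I : Ideal (MvPolynomial (Fin l) ℤ)) {m m' : Fin l →₀ ℕ} (h : m ≤ m') :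
    coefIdeal σ I m ≤ coefIdeal σ I m' := by
  rintro c (rfl | ⟨f, hfI, hf0, hflm, hflc⟩)
  · exact Or.inl rfl
  right
  refine ⟨MvPolynomial.monomial (m' - m) 1 * f, I.mul_mem_left _ hfI, ?_, ?_, ?_⟩
  all_goals {
    obtain ⟨hlm, hlc⟩ := lm_monomial_mul σ (one_ne_zero) hf0 (d := m' - m)
    rw [hflm] at hlm
    rw [tsub_add_cancel_of_le h] at hlm
    first
      | (exact mul_ne_zero (by simp [MvPolynomial.monomial_eq_zero]) hf0)
      | exact hlm
      | (rw [hlc, one_mul, hflc])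
  }

variable (I : Ideal (MvPolynomial (Fin l) ℤ))

noncomputable def gen (m : Fin l →₀ ℕ) : ℤ :=
  haveI := IsPrincipalIdealRing.principal (coefIdeal σ I m)
  Submodule.IsPrincipal.generator (coefIdeal σ I m)

lemma gen_dvd_of_mem {m : Fin l →₀ ℕ} {c : ℤ} (hc : c ∈ coefIdeal σ I m) : gen σ I m ∣ c := by
  haveI := IsPrincipalIdealRing.principal (coefIdeal σ I m)
  exact (Submodule.IsPrincipal.mem_iff_generator_dvd _).1 hc

lemma gen_mem (m : Fin l →₀ ℕ) : gen σ I m ∈ coefIdeal σ I m := by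
  haveI := IsPrincipalIdealRing.principal (coefIdeal σ I m)
  exact Submodule.IsPrincipal.generator_mem _

lemma gen_ne_zero {m : Fin l →₀ ℕ} (h : coefIdeal σ I m ≠ ⊥) : gen σ I m ≠ 0 := by
  haveI := IsPrincipalIdealRing.principal (coefIdeal σ I m)
  intro h0
  exact h ((Submodule.IsPrincipal.eq_bot_iff_generator_eq_zero _).2 h0)

/-- witness polynomial with leading monomial `m` and leading coefficient `gen σ I m`. -/
noncomputable def wit (m : Fin l →₀ ℕ) (h : coefIdeal σ I m ≠ ⊥) : MvPolynomial (Fin l) ℤ :=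
  ((gen_mem σ I m).resolve_left (gen_ne_zero σ I h)).choose

lemma wit_spec (m : Fin l →₀ ℕ) (h : coefIdeal σ I m ≠ ⊥) :
    wit σ I m h ∈ I ∧ wit σ I m h ≠ 0 ∧ σ.lm (wit σ I m h) = m ∧ σ.lc (wit σ I m h) = gen σ I m := by
  have := ((gen_mem σ I m).resolve_left (gen_ne_zero σ I h)).choose_spec
  exact ⟨this.1, this.2⟩

lemma gen_dvd_gen {m m' : Fin l →₀ ℕ} (h : m ≤ m') : gen σ I m' ∣ gen σ I m :=
  gen_dvd_of_mem σ I (coefIdeal_mono σ I h (gen_mem σ I m))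

/-- The finite covering set of monomials. -/
lemma exists_cover :
    ∃ M : Finset (Fin l →₀ ℕ), (∀ m ∈ M, coefIdeal σ I m ≠ ⊥) ∧
      ∀ m' : Fin l →₀ ℕ, coefIdeal σ I m' ≠ ⊥ →
        ∃ m ∈ M, m ≤ m' ∧ gen σ I m ∣ gen σ I m' := by
  classical
  set U : Set (Fin l →₀ ℕ) := {m | coefIdeal σ I m ≠ ⊥} with hU
  set nge : (Fin l →₀ ℕ) → ℕ := fun m => (gen σ I m).natAbs with hnge
  set Min : Set (Fin l →₀ ℕ) :=
    {m ∈ U | ∀ m'' ∈ U, (m'' ≤ m ∧ nge m'' = nge m) → m'' = m} with hMin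
  -- the strict relation
  set r : (Fin l →₀ ℕ) → (Fin l →₀ ℕ) → Prop :=
    fun a b => (a ≤ b ∧ nge a = nge b) ∧ a ≠ b with hr
  have hrwf : WellFounded r := by
    apply Subrelation.wf (r := (· < ·)) ?_ (wellFounded_lt)
    rintro a b ⟨⟨h1, _⟩, h2⟩
    exact lt_of_le_of_ne h1 h2
  -- covering by minimal elements
  have cover : ∀ m' ∈ U, ∃ m ∈ Min, m ≤ m' ∧ nge m = nge m' := by
    intro m' hm'
    set S : Set (Fin l →₀ ℕ) := {m ∈ U | m ≤ m' ∧ nge m = nge m'} with hS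
    obtain ⟨m, hmS, hmin⟩ := hrwf.has_min S ⟨m', hm', le_refl _, rfl⟩
    refine ⟨m, ⟨hmS.1, ?_⟩, hmS.2.1, hmS.2.2⟩
    intro m'' hm'' ⟨hle, heq⟩
    by_contra hne
    exact hmin m'' ⟨hm'', le_trans hle hmS.2.1, heq.trans hmS.2.2⟩ ⟨⟨hle, heq⟩, hne⟩
  -- Min is finite
  have hfin : Min.Finite := by
    by_contra hinf
    have hinf' : Min.Infinite := hinf
    let e := hinf'.natEmbedding
    obtain ⟨g, hg⟩ := (Set.isPWO_of_wellQuasiOrderedLE (Set.univ : Set (Fin l →₀ ℕ))).exists_monotone_subseq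
      (f := fun n => (e n : Fin l →₀ ℕ)) (fun n => Set.mem_univ _)
    set f : ℕ → Fin l →₀ ℕ := fun i => (e (g i) : Fin l →₀ ℕ) with hf
    have hfMin : ∀ i, f i ∈ Min := fun i => (e (g i)).2
    have hfU : ∀ i, f i ∈ U := fun i => (hfMin i).1
    set k : ℕ → ℕ := fun i => nge (f i) with hk
    have hkpos : ∀ i, 0 < k i := by
      intro i
      exact Int.natAbs_pos.2 (gen_ne_zero σ I (hfU i))
    have hkanti : ∀ i j, i ≤ j → k j ≤ k i := by
      intro i j hij
      have hle : f i ≤ f j := hg hij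
      have hdvd : gen σ I (f j) ∣ gen σ I (f i) := gen_dvd_gen σ I hle
      exact Nat.le_of_dvd (hkpos i) (Int.natAbs_dvd_natAbs.2 hdvd)
    obtain ⟨v, ⟨i, hv⟩, hmin⟩ := Nat.lt_wfRel.wf.has_min (Set.range k) ⟨k 0, 0, rfl⟩
    have h1 : k (i + 1) = k i := by
      have h2 : ¬ k (i + 1) < v := hmin _ ⟨i + 1, rfl⟩
      have h3 : k (i + 1) ≤ k i := hkanti i (i + 1) (Nat.le_succ i)
      rw [← hv] at h2
      omega
    have heqf : f i = f (i + 1) := by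
      have := (hfMin (i + 1)).2 (f i) (hfU i) ⟨hg (Nat.le_succ i), h1.symm⟩
      exact this
    have : e (g i) = e (g (i + 1)) := Subtype.ext heqf
    have := e.injective this
    exact ne_of_lt (g.strictMono (by omega : i < i + 1)) this
  refine ⟨hfin.toFinset, ?_, ?_⟩
  · intro m hm
    exact ((Set.Finite.mem_toFinset hfin).1 hm).1
  · intro m' hm'
    obtain ⟨m, hmMin, hle, heq⟩ := cover m' hm'
    refine ⟨m, (Set.Finite.mem_toFinset hfin).2 hmMin, hle, ?_⟩
    have heq' : (gen σ I m).natAbs = (gen σ I m').natAbs := heq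
    exact Int.natAbs_dvd_natAbs.1 (heq' ▸ dvd_refl _)

lemma exists_strong :
    ∃ G : Finset (MvPolynomial (Fin l) ℤ), (∀ g ∈ G, g ∈ I ∧ g ≠ 0) ∧
      ∀ f ∈ I, f ≠ 0 → ∃ g ∈ G, σ.lt g ∣ σ.lt f := by
  classical
  obtain ⟨M, hMU, hMcov⟩ := exists_cover σ I
  refine ⟨M.attach.image (fun m => wit σ I m.1 (hMU m.1 m.2)), ?_, ?_⟩
  · intro g hg
    simp only [Finset.mem_image, Finset.mem_attach] at hg
    obtain ⟨m, _, rfl⟩ := hg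
    exact ⟨(wit_spec σ I _ _).1, (wit_spec σ I _ _).2.1⟩
  · intro f hfI hf0
    have hmem : σ.lc f ∈ coefIdeal σ I (σ.lm f) := Or.inr ⟨f, hfI, hf0, rfl, rfl⟩
    have hne : coefIdeal σ I (σ.lm f) ≠ ⊥ := by
      rw [Submodule.ne_bot_iff]
      exact ⟨σ.lc f, hmem, lc_ne_zero σ hf0⟩
    obtain ⟨m, hmM, hle, hdvd⟩ := hMcov (σ.lm f) hne
    refine ⟨wit σ I m (hMU m hmM), ?_, ?_⟩
    · exact Finset.mem_image.2 ⟨⟨m, hmM⟩, Finset.mem_attach _ _, rfl⟩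
    · obtain ⟨_, _, hlm, hlc⟩ := wit_spec σ I m (hMU m hmM)
      rw [TermOrder.lt, TermOrder.lt, hlm, hlc]
      exact monomial_dvd_monomial hle (dvd_trans hdvd (gen_dvd_of_mem σ I hmem))

lemma mem_span_of_strong (G : Finset (MvPolynomial (Fin l) ℤ))
    (hGI : ∀ g ∈ G, g ∈ I)
    (hstr : ∀ f ∈ I, f ≠ 0 → ∃ g ∈ G, σ.lt g ∣ σ.lt f) :
    ∀ f ∈ I, f ∈ Ideal.span (G : Set (MvPolynomial (Fin l) ℤ)) := by
  have key : ∀ m : Fin l →₀ ℕ, ∀ f, f ∈ I → f ≠ 0 → σ.lm f = m →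
      f ∈ Ideal.span (G : Set (MvPolynomial (Fin l) ℤ)) := by
    intro m
    refine (sigma_wf σ).induction
      (C := fun m => ∀ f, f ∈ I → f ≠ 0 → σ.lm f = m →
        f ∈ Ideal.span (G : Set (MvPolynomial (Fin l) ℤ))) m ?_
    intro m' IH f hfI hf0 hlmf
    obtain ⟨g, hgG, hdvd⟩ := hstr f hfI hf0
    have hg0 : g ≠ 0 := by
      intro h0
      have hltg : σ.lt g = 0 := by
        rw [h0, TermOrder.lt]
        have : σ.lc (0 : MvPolynomial (Fin l) ℤ) = 0 := by
          simp [TermOrder.lc]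
        rw [this, MvPolynomial.monomial_zero]
      rw [hltg, zero_dvd_iff, TermOrder.lt] at hdvd
      exact lc_ne_zero σ hf0 (by simpa [MvPolynomial.monomial_eq_zero] using hdvd)
    obtain ⟨hmle, hcdvd⟩ := dvd_of_monomial_dvd_monomial (lc_ne_zero σ hf0) hdvd
    obtain ⟨c, hc⟩ := hcdvd
    set δ : Fin l →₀ ℕ := σ.lm f - σ.lm g with hδ
    have hδadd : δ + σ.lm g = σ.lm f := tsub_add_cancel_of_le hmle
    set q : MvPolynomial (Fin l) ℤ := MvPolynomial.monomial δ c with hq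
    set f' : MvPolynomial (Fin l) ℤ := f - q * g with hf'
    have hcoeff_top : MvPolynomial.coeff (σ.lm f) (q * g) = σ.lc f := by
      rw [hq, ← hδadd, MvPolynomial.coeff_monomial_mul]
      rw [hc]; ring_nf
      rfl
    have hcoeff0 : MvPolynomial.coeff (σ.lm f) f' = 0 := by
      rw [hf', MvPolynomial.coeff_sub, hcoeff_top]
      simp [TermOrder.lc]
    have hsupport : ∀ m'' ∈ f'.support, σ.lin.lt m'' (σ.lm f) := by
      intro m'' hm''
      rw [MvPolynomial.mem_support_iff] at hm''
      rcases σ.lin.le_total (σ.lm f) m'' with h | h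
      · exfalso
        by_cases he : m'' = σ.lm f
        · rw [he] at hm''; exact hm'' hcoeff0
        · have hlt : σ.lin.lt (σ.lm f) m'' := (σ.lin.lt_iff_le_not_ge _ _).2
            ⟨h, fun hc2 => he (σ.lin.le_antisymm _ _ hc2 h)⟩
          apply hm''
          rw [hf', MvPolynomial.coeff_sub, coeff_eq_zero_of_lm_lt σ hlt,
            hq, coeff_monomial_mul_eq_zero σ (d := δ) (c := c) (g := g) (by rw [hδadd]; exact hlt), sub_zero]
      · by_cases he : m'' = σ.lm f
        · exfalso; rw [he] at hm''; exact hm'' hcoeff0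
        · exact (σ.lin.lt_iff_le_not_ge _ _).2
            ⟨h, fun hc2 => he (σ.lin.le_antisymm _ _ h hc2)⟩
    have hqg_span : q * g ∈ Ideal.span (G : Set (MvPolynomial (Fin l) ℤ)) :=
      Ideal.mul_mem_left _ q (Ideal.subset_span hgG)
    by_cases hf'0 : f' = 0
    · have : f = q * g := by rw [hf'] at hf'0; linear_combination (norm := ring_nf) hf'0
      rw [this]; exact hqg_span
    · have hf'I : f' ∈ I := I.sub_mem hfI (I.mul_mem_left q (hGI g hgG))
      have hlt : σ.lin.lt (σ.lm f') m' := by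
        rw [← hlmf]
        exact hsupport _ (lm_mem_support σ hf'0)
      have hf'span := IH (σ.lm f') hlt f' hf'I hf'0 rfl
      have : f = f' + q * g := by rw [hf']; ring
      rw [this]
      exact Ideal.add_mem _ hf'span hqg_span
  intro f hfI
  by_cases hf0 : f = 0
  · rw [hf0]; exact Ideal.zero_mem _
  · exact key (σ.lm f) f hfI hf0 rfl


end Aux

/-- Every nonzero ideal of `ℤ[x_1,…,x_l]` has a minimal strong `σ`-Gröbner basis. -/
theorem exists_minimal_strong_groebner_basis {l : ℕ} (σ : TermOrder l)
    (I : Ideal (MvPolynomial (Fin l) ℤ)) (hI : I ≠ ⊥) :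
    ∃ G : Finset (MvPolynomial (Fin l) ℤ), IsMinimalStrongGroebnerBasis σ I G := by
  classical
  obtain ⟨G₀, hG₀, hstr₀⟩ := exists_strong σ I
  have hex : ∃ n, ∃ S : Finset (MvPolynomial (Fin l) ℤ), S ⊆ G₀ ∧ S.card = n ∧
      (∀ f ∈ I, f ≠ 0 → ∃ g ∈ S, σ.lt g ∣ σ.lt f) :=
    ⟨G₀.card, G₀, subset_rfl, rfl, hstr₀⟩
  obtain ⟨S, hSsub, hScard, hSstr⟩ := Nat.find_spec hex
  refine ⟨S, fun g hg => (hG₀ g (hSsub hg)).2, ?_, hSstr, ?_⟩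
  · apply le_antisymm
    · rw [Ideal.span_le]
      intro g hg
      exact (hG₀ g (hSsub hg)).1
    · intro f hf
      exact mem_span_of_strong σ I S (fun g hg => (hG₀ g (hSsub hg)).1) hSstr f hf
  · intro g hg g' hg' hne hdvd
    have hstr' : ∀ f ∈ I, f ≠ 0 → ∃ h ∈ S.erase g', σ.lt h ∣ σ.lt f := by
      intro f hfI hf0
      obtain ⟨h, hhS, hhdvd⟩ := hSstr f hfI hf0
      by_cases he : h = g'
      · exact ⟨g, Finset.mem_erase.2 ⟨hne, hg⟩, dvd_trans hdvd (he ▸ hhdvd)⟩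
      · exact ⟨h, Finset.mem_erase.2 ⟨he, hhS⟩, hhdvd⟩
    have hlt : (S.erase g').card < Nat.find hex := by
      rw [← hScard]
      exact Finset.card_erase_lt_of_mem hg'
    exact Nat.find_min hex hlt
      ⟨S.erase g', (Finset.erase_subset _ _).trans hSsub, rfl, hstr'⟩


end HApaper
end

section
/- Let A = {H_1,…,H_n} be a central hyperplane arrangement in Q^l with primitive integer defining forms. Let p be a prime that is good for A, does not divide n, and is a non-zero divisor on Z[x_1,…,x_l]/J(A)_Z. If A_p is free in F_p^l with exponents (e_1,…,e_l), then A is free in Q^l with exponents (e_1,…,e_l). -/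
open MvPolynomial

namespace HApaper

variable {K : Type*} [CommRing K] {l n : ℕ}

/-- A central arrangement in `ℚ^l` presented by primitive integer defining forms:
`n` nonzero homogeneous integral linear forms, each with no prime dividing all of its
coefficients, defining pairwise distinct hyperplanes of `ℚ^l`. -/
structure IsIntegralArrangement (α : Fin n → MvPolynomial (Fin l) ℤ) : Prop where
  homog : ∀ i, (α i).IsHomogeneous 1
  nonzero : ∀ i, α i ≠ 0
  primitive : ∀ i (p : ℕ), p.Prime → ∃ m, ¬ ((p : ℤ) ∣ MvPolynomial.coeff m (α i))
  distinct : ∀ i j, i ≠ j → ∀ c : ℚ,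
    MvPolynomial.map (Int.castRingHom ℚ) (α i) ≠ c • MvPolynomial.map (Int.castRingHom ℚ) (α j)

/-- Reduction modulo `p` of an integral polynomial, `π_p`. -/
noncomputable def modP (p : ℕ) (f : MvPolynomial (Fin l) ℤ) : MvPolynomial (Fin l) (ZMod p) :=
  MvPolynomial.map (Int.castRingHom (ZMod p)) f

/-- A prime `p` is good for `A` if `π_p(Q(A))` is reduced (squarefree). -/
def IsGoodPrime (α : Fin n → MvPolynomial (Fin l) ℤ) (p : ℕ) : Prop :=
  p.Prime ∧ Squarefree (modP p (defPoly α))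

/-- The Jacobian ideal `J(A)_ℤ ⊆ ℤ[x_1,…,x_l]`, generated by `Q(A)` and its partial
derivatives. -/
noncomputable def jacobianIdealZ (α : Fin n → MvPolynomial (Fin l) ℤ) :
    Ideal (MvPolynomial (Fin l) ℤ) :=
  Ideal.span ({defPoly α} ∪ Set.range fun j => MvPolynomial.pderiv j (defPoly α))


section Auxiliary

/-! ### Homogeneity auxiliary lemmas -/

lemma hap_degree_add {σ : Type*} (a b : σ →₀ ℕ) :
    (a + b).degree = a.degree + b.degree := by
  simp [Finsupp.degree_eq_weight_one, map_add]

lemma hap_exists_single_of_degree_one {σ : Type*} {s : σ →₀ ℕ} (hs : s.degree = 1) :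
    ∃ j, s = Finsupp.single j 1 := by
  classical
  have h0 : s ≠ 0 := by
    rintro rfl
    simp at hs
  obtain ⟨j, hj⟩ := Finsupp.ne_iff.mp h0
  simp only [Finsupp.coe_zero, Pi.zero_apply] at hj
  have hj1 : s j = 1 :=
    le_antisymm (hs ▸ Finsupp.le_degree j s) (Nat.one_le_iff_ne_zero.mpr hj)
  refine ⟨j, ?_⟩
  ext k
  rcases eq_or_ne k j with rfl | hk
  · simp [hj1]
  · rw [Finsupp.single_apply, if_neg (Ne.symm hk)]
    by_contra hne
    have hks : k ∈ s.support := Finsupp.mem_support_iff.mpr hne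
    have hjs : j ∈ s.support := Finsupp.mem_support_iff.mpr hj
    have hsub : ({j, k} : Finset σ) ⊆ s.support := by
      intro x hx
      rcases Finset.mem_insert.mp hx with rfl | hx
      · exact hjs
      · rw [Finset.mem_singleton.mp hx]; exact hks
    have h2 : s j + s k ≤ s.degree := by
      rw [Finsupp.degree]
      calc s j + s k = ∑ x ∈ ({j, k} : Finset σ), s x := by
            rw [Finset.sum_insert (Finset.notMem_singleton.mpr (Ne.symm hk)),
              Finset.sum_singleton]
        _ ≤ _ := Finset.sum_le_sum_of_subset hsub
    omega

lemma hap_isHomog_iff {σ R : Type*} [CommSemiring R] {f : MvPolynomial σ R} {m : ℕ} :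
    f.IsHomogeneous m ↔ ∀ d : σ →₀ ℕ, MvPolynomial.coeff d f ≠ 0 → d.degree = m := by
  unfold MvPolynomial.IsHomogeneous MvPolynomial.IsWeightedHomogeneous
  simp_rw [Finsupp.degree_eq_weight_one]
  exact Iff.rfl

lemma hap_degree_eq {σ R : Type*} [CommSemiring R] {f : MvPolynomial σ R} {m : ℕ}
    (hf : f.IsHomogeneous m) {d : σ →₀ ℕ} (hd : MvPolynomial.coeff d f ≠ 0) :
    d.degree = m := hap_isHomog_iff.mp hf d hd

lemma hap_homog_one_eq_sum {σ R : Type*} [Fintype σ] [CommSemiring R]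
    {φ : MvPolynomial σ R} (hφ : φ.IsHomogeneous 1) :
    φ = ∑ j, C (coeff (Finsupp.single j 1) φ) * X j := by
  classical
  ext s
  rw [MvPolynomial.coeff_sum]
  simp_rw [coeff_C_mul, coeff_X']
  by_cases hs : ∃ j : σ, s = Finsupp.single j 1
  · obtain ⟨j, rfl⟩ := hs
    rw [Finset.sum_eq_single j]
    · rw [if_pos rfl, mul_one]
    · intro k _ hkj
      rw [if_neg, mul_zero]
      intro h
      exact hkj (Finsupp.single_left_injective one_ne_zero h)
    · intro h; exact absurd (Finset.mem_univ j) h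
  · have hz : coeff s φ = 0 := by
      by_contra h
      obtain ⟨j, hj⟩ := hap_exists_single_of_degree_one (hap_degree_eq hφ h)
      exact hs ⟨j, hj⟩
    rw [hz]
    symm
    apply Finset.sum_eq_zero
    intro k _
    rw [if_neg, mul_zero]
    intro h; exact hs ⟨k, h.symm⟩

lemma hap_pderiv_homog_one {σ R : Type*} [Fintype σ] [CommSemiring R]
    {φ : MvPolynomial σ R} (hφ : φ.IsHomogeneous 1) (j : σ) :
    pderiv j φ = C (coeff (Finsupp.single j 1) φ) := by
  classical
  conv_lhs => rw [hap_homog_one_eq_sum hφ]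
  rw [map_sum]
  rw [Finset.sum_eq_single j]
  · rw [pderiv_C_mul, pderiv_X_self, mul_one]
  · intro k _ hkj
    rw [pderiv_C_mul, pderiv_X_of_ne hkj, mul_zero]
  · intro h; exact absurd (Finset.mem_univ j) h

lemma hap_exists_pivot {σ R : Type*} [Fintype σ] [CommSemiring R]
    {φ : MvPolynomial σ R} (hφ : φ.IsHomogeneous 1) (h0 : φ ≠ 0) :
    ∃ j, coeff (Finsupp.single j 1) φ ≠ 0 := by
  by_contra h
  push_neg at h
  apply h0
  rw [hap_homog_one_eq_sum hφ]
  exact Finset.sum_eq_zero fun j _ => by rw [h j, map_zero, zero_mul]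

lemma hap_hc_mul {σ R : Type*} [CommSemiring R] {f : MvPolynomial σ R} {m : ℕ}
    (hf : f.IsHomogeneous m) (g : MvPolynomial σ R) (d : ℕ) :
    homogeneousComponent (m + d) (f * g) = f * homogeneousComponent d g := by
  classical
  ext s
  rw [coeff_homogeneousComponent, MvPolynomial.coeff_mul, MvPolynomial.coeff_mul]
  simp_rw [coeff_homogeneousComponent]
  split_ifs with h
  · refine Finset.sum_congr rfl ?_
    rintro ⟨a, b⟩ hab
    rw [Finset.HasAntidiagonal.mem_antidiagonal] at hab
    dsimp only
    by_cases ha : coeff a f = 0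
    · simp [ha]
    · have ha' : a.degree = m := hap_degree_eq hf ha
      have hd : a.degree + b.degree = m + d := by rw [← hap_degree_add, hab, h]
      rw [if_pos (by omega)]
  · symm
    apply Finset.sum_eq_zero
    rintro ⟨a, b⟩ hab
    rw [Finset.HasAntidiagonal.mem_antidiagonal] at hab
    dsimp only
    by_cases ha : coeff a f = 0
    · simp [ha]
    · have ha' : a.degree = m := hap_degree_eq hf ha
      rw [if_neg, mul_zero]
      intro hb
      exact h (by rw [← hab, hap_degree_add, ha', hb])

lemma hap_hc_mul_lt {σ R : Type*} [CommSemiring R] {f : MvPolynomial σ R} {m : ℕ}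
    (hf : f.IsHomogeneous m) (g : MvPolynomial σ R) {e : ℕ} (he : e < m) :
    homogeneousComponent e (f * g) = 0 := by
  classical
  ext s
  rw [coeff_homogeneousComponent, coeff_zero]
  split_ifs with h
  · rw [MvPolynomial.coeff_mul]
    apply Finset.sum_eq_zero
    rintro ⟨a, b⟩ hab
    rw [Finset.HasAntidiagonal.mem_antidiagonal] at hab
    by_cases ha : coeff a f = 0
    · simp [ha]
    · exfalso
      have ha' : a.degree = m := hap_degree_eq hf ha
      have := hap_degree_add a b
      rw [hab, h, ha'] at this
      omega
  · rfl

lemma hap_hc_map {σ R S' : Type*} [CommSemiring R] [CommSemiring S'] (φ : R →+* S') (d : ℕ)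
    (f : MvPolynomial σ R) :
    homogeneousComponent d (MvPolynomial.map φ f) =
      MvPolynomial.map φ (homogeneousComponent d f) := by
  ext s
  rw [coeff_homogeneousComponent, coeff_map, coeff_map, coeff_homogeneousComponent]
  split_ifs <;> simp

lemma hap_homog_of_mul_homog {σ R : Type*} [CommRing R] [IsDomain R]
    {f g : MvPolynomial σ R} {m e : ℕ}
    (hf : f.IsHomogeneous m) (hf0 : f ≠ 0) (hfg : (f * g).IsHomogeneous e) :
    g.IsHomogeneous (e - m) := by
  have key : ∀ d : ℕ, d + m ≠ e → homogeneousComponent d g = 0 := by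
    intro d hd
    have h2 : homogeneousComponent (m + d) (f * g) = 0 := by
      rw [homogeneousComponent_of_mem ((mem_homogeneousSubmodule _ _).mpr hfg)]
      exact if_neg (by omega)
    rw [hap_hc_mul hf g d] at h2
    rcases mul_eq_zero.mp h2 with h | h
    · exact absurd h hf0
    · exact h
  rw [hap_isHomog_iff]
  intro s hs
  by_contra hne
  have hz : homogeneousComponent s.degree g = 0 := key s.degree (by omega)
  have hc := coeff_homogeneousComponent s.degree g s
  rw [hz, if_pos rfl, coeff_zero] at hc
  exact hs hc.symm

lemma hap_homog_zero_eq_C {σ R : Type*} [CommSemiring R] {f : MvPolynomial σ R}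
    (hf : f.IsHomogeneous 0) : f = C (coeff 0 f) := by
  have h := homogeneousComponent_of_mem (m := 0) ((mem_homogeneousSubmodule _ _).mpr hf)
  rw [if_pos rfl] at h
  exact h.symm.trans (homogeneousComponent_zero f)

/-! ### Primality of nonzero homogeneous linear forms over a field -/

lemma hap_prime_X {m : ℕ} {F : Type*} [Field F] (j : Fin (m + 1)) :
    Prime (X j : MvPolynomial (Fin (m + 1)) F) := by
  have h0 : Prime (X 0 : MvPolynomial (Fin (m + 1)) F) := by
    rw [← MulEquiv.prime_iff (MvPolynomial.finSuccEquiv F m).toMulEquiv]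
    have : (MvPolynomial.finSuccEquiv F m).toMulEquiv (X 0) = Polynomial.X :=
      MvPolynomial.finSuccEquiv_X_zero
    rw [this]
    exact Polynomial.prime_X
  rw [← MulEquiv.prime_iff (MvPolynomial.renameEquiv F (Equiv.swap (0 : Fin (m + 1)) j)).toMulEquiv] at h0
  have : (MvPolynomial.renameEquiv F (Equiv.swap (0 : Fin (m + 1)) j)).toMulEquiv
      (X 0 : MvPolynomial (Fin (m + 1)) F) = X j := by
    show MvPolynomial.rename _ (X 0) = X j
    rw [MvPolynomial.rename_X, Equiv.swap_apply_left]
  rwa [this] at h0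

lemma hap_prime_linear {F : Type*} [Field F] {m : ℕ} (a : Fin (m + 1) → F) (j₀ : Fin (m + 1))
    (haj : a j₀ ≠ 0) : Prime (∑ j, (C (a j) * X j : MvPolynomial (Fin (m + 1)) F)) := by
  classical
  set r : MvPolynomial (Fin (m + 1)) F := ∑ k ∈ Finset.univ.erase j₀, C (a k) * X k with hr
  have hsplit : (∑ j, C (a j) * X j : MvPolynomial (Fin (m + 1)) F)
      = C (a j₀) * X j₀ + r :=
    (Finset.add_sum_erase _ (fun k => C (a k) * X k) (Finset.mem_univ j₀)).symm
  set u : Fin (m + 1) → MvPolynomial (Fin (m + 1)) F :=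
    Function.update (fun j => (X j : MvPolynomial (Fin (m + 1)) F)) j₀ (∑ j, C (a j) * X j)
    with hu
  set v : Fin (m + 1) → MvPolynomial (Fin (m + 1)) F :=
    Function.update (fun j => (X j : MvPolynomial (Fin (m + 1)) F)) j₀
      (C (a j₀)⁻¹ * (X j₀ - r)) with hv
  have huj : u j₀ = ∑ j, C (a j) * X j := Function.update_self _ _ _
  have hun : ∀ k, k ≠ j₀ → u k = X k := fun k hk => Function.update_of_ne hk _ _
  have hvj : v j₀ = C (a j₀)⁻¹ * (X j₀ - r) := Function.update_self _ _ _
  have hvn : ∀ k, k ≠ j₀ → v k = X k := fun k hk => Function.update_of_ne hk _ _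
  have hwr : ∀ w : Fin (m + 1) → MvPolynomial (Fin (m + 1)) F,
      (∀ k, k ≠ j₀ → w k = X k) → aeval w r = r := by
    intro w hw
    rw [hr, map_sum]
    refine Finset.sum_congr rfl fun k hk => ?_
    have hkj : k ≠ j₀ := (Finset.mem_erase.mp hk).1
    rw [map_mul, aeval_C, aeval_X, algebraMap_eq, hw k hkj]
  have h1 : ∀ j, aeval u (v j) = X j := by
    intro j
    rcases eq_or_ne j j₀ with rfl | hj
    · rw [hvj, map_mul, aeval_C, map_sub, aeval_X, algebraMap_eq, huj,
        hwr u hun, hsplit, add_sub_cancel_right, ← mul_assoc, ← C_mul,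
        inv_mul_cancel₀ haj, C_1, one_mul]
    · rw [hvn j hj, aeval_X, hun j hj]
  have h2 : ∀ j, aeval v (u j) = X j := by
    intro j
    rcases eq_or_ne j j₀ with rfl | hj
    · rw [huj, hsplit, map_add, map_mul, aeval_C, aeval_X, algebraMap_eq, hvj,
        hwr v hvn, ← mul_assoc, ← C_mul, mul_inv_cancel₀ haj, C_1, one_mul,
        sub_add_cancel]
    · rw [hun j hj, aeval_X, hvn j hj]
  let E : MvPolynomial (Fin (m + 1)) F ≃ₐ[F] MvPolynomial (Fin (m + 1)) F :=
    AlgEquiv.ofAlgHom (aeval u) (aeval v)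
      (by
        apply MvPolynomial.algHom_ext
        intro j
        simp only [AlgHom.comp_apply, aeval_X, AlgHom.id_apply]
        exact h1 j)
      (by
        apply MvPolynomial.algHom_ext
        intro j
        simp only [AlgHom.comp_apply, aeval_X, AlgHom.id_apply]
        exact h2 j)
  have hE : E.toMulEquiv (X j₀) = ∑ j, C (a j) * X j := by
    show aeval u (X j₀) = _
    rw [aeval_X, huj]
  rw [← hE, MulEquiv.prime_iff E.toMulEquiv]
  exact hap_prime_X j₀

lemma hap_prime_homog_one {F : Type*} [Field F] {l : ℕ} {φ : MvPolynomial (Fin l) F}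
    (hφ : φ.IsHomogeneous 1) (h0 : φ ≠ 0) : Prime φ := by
  obtain ⟨j₀, hj₀⟩ := hap_exists_pivot hφ h0
  rcases l with _ | m
  · exact j₀.elim0
  rw [hap_homog_one_eq_sum hφ]
  exact hap_prime_linear _ j₀ hj₀

end Auxiliary


section DerApplyLemmas

variable {K : Type*} [CommRing K] {l n : ℕ}

lemma hap_derApply_mul (δ : Fin l → MvPolynomial (Fin l) K) (g h : MvPolynomial (Fin l) K) :
    derApply δ (g * h) = derApply δ g * h + g * derApply δ h := by
  unfold derApply
  rw [Finset.sum_mul, Finset.mul_sum, ← Finset.sum_add_distrib]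
  refine Finset.sum_congr rfl fun j _ => ?_
  rw [pderiv_mul]
  ring

lemma hap_derApply_prod {ι : Type*} [DecidableEq ι] (δ : Fin l → MvPolynomial (Fin l) K)
    (s : Finset ι) (f : ι → MvPolynomial (Fin l) K) :
    derApply δ (∏ i ∈ s, f i)
      = ∑ i ∈ s, derApply δ (f i) * ∏ k ∈ s.erase i, f k := by
  induction s using Finset.induction_on with
  | empty => simp [derApply]
  | @insert a s ha ih =>
    rw [Finset.prod_insert ha, hap_derApply_mul, ih, Finset.sum_insert ha,
      Finset.erase_insert ha, Finset.mul_sum]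
    congr 1
    refine Finset.sum_congr rfl fun i hi => ?_
    have hia : i ≠ a := by rintro rfl; exact ha hi
    have h1 : (insert a s).erase i = insert a (s.erase i) :=
      Finset.erase_insert_of_ne (Ne.symm hia)
    have h2 : a ∉ s.erase i := fun h => ha (Finset.mem_of_mem_erase h)
    rw [h1, Finset.prod_insert h2]
    ring

lemma hap_defPoly_dvd_derApply (α : Fin n → MvPolynomial (Fin l) K)
    {δ : Fin l → MvPolynomial (Fin l) K} (hδ : δ ∈ logDer α) :
    defPoly α ∣ derApply δ (defPoly α) := by
  classical
  unfold defPoly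
  rw [hap_derApply_prod]
  apply Finset.dvd_sum
  intro i _
  obtain ⟨c, hc⟩ := hδ i
  refine ⟨c, ?_⟩
  rw [hc, ← Finset.mul_prod_erase Finset.univ α (Finset.mem_univ i)]
  ring

lemma hap_mem_logDer_of_dvd {α : Fin n → MvPolynomial (Fin l) K}
    (hpr : ∀ i, Prime (α i)) (hnd : ∀ i j, i ≠ j → ¬ α i ∣ α j)
    (δ : Fin l → MvPolynomial (Fin l) K)
    (h : defPoly α ∣ derApply δ (defPoly α)) : δ ∈ logDer α := by
  classical
  intro i
  have h1 : α i ∣ derApply δ (defPoly α) :=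
    dvd_trans (Finset.dvd_prod_of_mem α (Finset.mem_univ i)) h
  unfold defPoly at h1
  rw [hap_derApply_prod] at h1
  have h3 : α i ∣ ∑ j ∈ Finset.univ.erase i,
      derApply δ (α j) * ∏ k ∈ Finset.univ.erase j, α k := by
    apply Finset.dvd_sum
    intro j hj
    have hji : j ≠ i := (Finset.mem_erase.mp hj).1
    refine Dvd.dvd.mul_left ?_ _
    exact Finset.dvd_prod_of_mem α (Finset.mem_erase.mpr ⟨Ne.symm hji, Finset.mem_univ i⟩)
  have hsum := Finset.add_sum_erase Finset.univ
    (fun j => derApply δ (α j) * ∏ k ∈ Finset.univ.erase j, α k) (Finset.mem_univ i)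
  have h2 : α i ∣ derApply δ (α i) * ∏ k ∈ Finset.univ.erase i, α k := by
    have : derApply δ (α i) * ∏ k ∈ Finset.univ.erase i, α k
        = (∑ j, derApply δ (α j) * ∏ k ∈ Finset.univ.erase j, α k)
          - ∑ j ∈ Finset.univ.erase i,
              derApply δ (α j) * ∏ k ∈ Finset.univ.erase j, α k := by
      rw [← hsum]; ring
    rw [this]
    exact dvd_sub h1 h3
  rcases (hpr i).2.2 _ _ h2 with h' | h'
  · exact h'
  · exfalso
    obtain ⟨j, hj, hdvd⟩ := (hpr i).exists_mem_finset_dvd h'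
    exact hnd i j (Ne.symm (Finset.mem_erase.mp hj).1) hdvd

lemma hap_derApply_map {K' : Type*} [CommRing K'] (φ : K →+* K')
    (δ : Fin l → MvPolynomial (Fin l) K) (g : MvPolynomial (Fin l) K) :
    derApply (fun j => MvPolynomial.map φ (δ j)) (MvPolynomial.map φ g)
      = MvPolynomial.map φ (derApply δ g) := by
  unfold derApply
  rw [map_sum]
  refine Finset.sum_congr rfl fun j _ => ?_
  rw [map_mul, pderiv_map]

lemma hap_defPoly_map {K' : Type*} [CommRing K'] (φ : K →+* K') (α : Fin n → MvPolynomial (Fin l) K) :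
    defPoly (fun i => MvPolynomial.map φ (α i)) = MvPolynomial.map φ (defPoly α) := by
  unfold defPoly
  rw [map_prod]

lemma hap_logDer_component {α : Fin n → MvPolynomial (Fin l) K}
    (hh : ∀ i, (α i).IsHomogeneous 1) {δ : Fin l → MvPolynomial (Fin l) K}
    (hδ : δ ∈ logDer α) (d : ℕ) :
    (fun j => homogeneousComponent d (δ j)) ∈ logDer α := by
  intro i
  obtain ⟨w, hw⟩ := hδ i
  have hD : derApply (fun j => homogeneousComponent d (δ j)) (α i)
      = homogeneousComponent d (derApply δ (α i)) := by
    unfold derApply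
    rw [map_sum]
    refine Finset.sum_congr rfl fun j _ => ?_
    dsimp only
    rw [hap_pderiv_homog_one (hh i) j, mul_comm (δ j), homogeneousComponent_C_mul, mul_comm]
  rw [hD, hw]
  rcases d with _ | d'
  · rw [hap_hc_mul_lt (hh i) w (by omega)]
    exact dvd_zero _
  · have h := hap_hc_mul (hh i) w d'
    rw [Nat.add_comm 1 d'] at h
    rw [h]
    exact Dvd.intro _ rfl

end DerApplyLemmas



section DetLemmas

variable {F : Type*} [Field F] {l n : ℕ}

lemma hap_alpha_dvd_det {α : Fin n → MvPolynomial (Fin l) F}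
    (hh : ∀ i, (α i).IsHomogeneous 1) (M : Matrix (Fin l) (Fin l) (MvPolynomial (Fin l) F))
    (hM : ∀ i, (fun j => M i j) ∈ logDer α) (k : Fin n) (h0 : α k ≠ 0) :
    α k ∣ M.det := by
  classical
  obtain ⟨j₀, hj₀⟩ := hap_exists_pivot (hh k) h0
  set a : Fin l → F := fun j => coeff (Finsupp.single j 1) (α k) with ha
  set w : Fin l → MvPolynomial (Fin l) F := M.mulVec (fun j => C (a j)) with hwdef
  have hw : ∀ i, w i = derApply (fun j => M i j) (α k) := by
    intro i
    rw [hwdef]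
    show ∑ j, M i j * C (a j) = _
    unfold derApply
    refine Finset.sum_congr rfl fun j _ => ?_
    rw [hap_pderiv_homog_one (hh k) j]
  have key : M.adjugate.mulVec w = M.det • fun j => C (a j) := by
    rw [hwdef, Matrix.mulVec_mulVec, Matrix.adjugate_mul, Matrix.smul_mulVec,
      Matrix.one_mulVec]
  have h1 : α k ∣ (M.adjugate.mulVec w) j₀ := by
    show α k ∣ ∑ t, M.adjugate j₀ t * w t
    apply Finset.dvd_sum
    intro t _
    refine Dvd.dvd.mul_left ?_ _
    rw [hw t]
    exact hM t k
  rw [key] at h1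
  have h2 : (M.det • fun j => C (a j)) j₀ = M.det * C (a j₀) := rfl
  rw [h2] at h1
  have hfinal : M.det = M.det * C (a j₀) * C ((a j₀)⁻¹) := by
    rw [mul_assoc, ← C_mul, mul_inv_cancel₀ hj₀, C_1, mul_one]
  exact hfinal ▸ h1.mul_right (C ((a j₀)⁻¹))

lemma hap_prod_dvd {α : Fin n → MvPolynomial (Fin l) F}
    (hpr : ∀ i, Prime (α i)) (hnd : ∀ i j, i ≠ j → ¬ α i ∣ α j)
    {d : MvPolynomial (Fin l) F} (h : ∀ i, α i ∣ d) : defPoly α ∣ d := by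
  classical
  unfold defPoly
  suffices H : ∀ s : Finset (Fin n), ∀ d : MvPolynomial (Fin l) F,
      (∀ i ∈ s, α i ∣ d) → ∏ i ∈ s, α i ∣ d from H Finset.univ d fun i _ => h i
  intro s
  induction s using Finset.induction_on with
  | empty => intro d _; simp
  | @insert a s ha ih =>
    intro d hd
    obtain ⟨d', rfl⟩ := hd a (Finset.mem_insert_self a s)
    rw [Finset.prod_insert ha]
    refine mul_dvd_mul_left _ (ih _ ?_)
    intro i hi
    have hia : i ≠ a := fun h' => ha (h' ▸ hi)
    rcases (hpr i).2.2 _ _ (hd i (Finset.mem_insert_of_mem hi)) with h' | h'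
    · exact absurd h' (hnd i a hia)
    · exact h'

lemma hap_det_homog (M : Matrix (Fin l) (Fin l) (MvPolynomial (Fin l) F)) (e : Fin l → ℕ)
    (hM : ∀ i j, (M i j).IsHomogeneous (e i)) : M.det.IsHomogeneous (∑ i, e i) := by
  rw [Matrix.det_apply]
  apply MvPolynomial.IsHomogeneous.sum
  intro σ _
  have hprod : (∏ i, M (σ i) i).IsHomogeneous (∑ i, e (σ i)) :=
    MvPolynomial.IsHomogeneous.prod _ _ _ fun i _ => hM (σ i) i
  have hsum : ∑ i, e (σ i) = ∑ i, e i := Equiv.sum_comp σ e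
  rw [hsum] at hprod
  rcases Int.units_eq_one_or (Equiv.Perm.sign σ) with h | h <;> rw [h]
  · rwa [one_smul]
  · rw [Units.smul_def, Units.val_neg, Units.val_one, neg_smul, one_smul]
    exact MvPolynomial.IsHomogeneous.neg hprod

lemma hap_det_ne_zero (M : Matrix (Fin l) (Fin l) (MvPolynomial (Fin l) F))
    (h : LinearIndependent (MvPolynomial (Fin l) F) fun i => (fun j => M i j)) :
    M.det ≠ 0 := by
  classical
  intro hdet
  obtain ⟨v, hvne, hveq⟩ := Matrix.exists_vecMul_eq_zero_iff.mpr hdet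
  apply hvne
  have hz : (∑ i, v i • fun j => M i j) = (0 : Fin l → MvPolynomial (Fin l) F) := by
    funext j
    have h3 := congrFun hveq j
    show (∑ i, v i • fun j => M i j) j = 0
    rw [Finset.sum_apply]
    simpa [Matrix.vecMul, dotProduct] using h3
  have hv := Fintype.linearIndependent_iff.mp h v hz
  funext i
  exact hv i

end DetLemmas


section SaitoConverse

variable {F : Type*} [Field F] {l n : ℕ}

lemma hap_basis_repr_eq {α : Fin n → MvPolynomial (Fin l) F}
    (b : Module.Basis (Fin l) (MvPolynomial (Fin l) F) (logDer α))
    (x : Fin l → MvPolynomial (Fin l) F) (hx : x ∈ logDer α) :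
    x = fun j => ∑ u, b.repr ⟨x, hx⟩ u * (b u : Fin l → MvPolynomial (Fin l) F) j := by
  have h1 := b.sum_repr ⟨x, hx⟩
  have h2 : x = ((∑ u, b.repr ⟨x, hx⟩ u • b u : logDer α) : Fin l → MvPolynomial (Fin l) F) := by
    rw [h1]
  funext j
  have h3 := congrFun h2 j
  rw [AddSubmonoidClass.coe_finset_sum, Finset.sum_apply] at h3
  rw [h3]
  refine Finset.sum_congr rfl fun u _ => ?_
  rw [Submodule.coe_smul, Pi.smul_apply, smul_eq_mul]

lemma hap_saito_converse {α : Fin n → MvPolynomial (Fin l) F}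
    (hh : ∀ i, (α i).IsHomogeneous 1) (h0 : ∀ i, α i ≠ 0)
    (hnd : ∀ i j, i ≠ j → ¬ α i ∣ α j)
    (b : Module.Basis (Fin l) (MvPolynomial (Fin l) F) (logDer α)) (e : Fin l → ℕ)
    (hbe : ∀ i, IsHomogVF ((b i : Fin l → MvPolynomial (Fin l) F)) (e i)) :
    ∑ i, e i = n := by
  classical
  rcases Nat.eq_zero_or_pos l with rfl | hl
  · rcases Nat.eq_zero_or_pos n with rfl | hn
    · simp
    · exfalso
      obtain ⟨j, _⟩ := hap_exists_pivot (hh ⟨0, hn⟩) (h0 ⟨0, hn⟩)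
      exact j.elim0
  obtain ⟨m, rfl⟩ : ∃ m, l = m + 1 := ⟨l - 1, by omega⟩
  have hpr : ∀ i, Prime (α i) := fun i => hap_prime_homog_one (hh i) (h0 i)
  set M : Matrix (Fin (m + 1)) (Fin (m + 1)) (MvPolynomial (Fin (m + 1)) F) :=
    Matrix.of (fun i j => (b i : Fin (m + 1) → MvPolynomial (Fin (m + 1)) F) j) with hM
  have hMlog : ∀ i, (fun j => M i j) ∈ logDer α := fun i => (b i).2
  -- determinant is nonzero
  have hli : LinearIndependent (MvPolynomial (Fin (m + 1)) F) (fun i => (fun j => M i j)) := by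
    have := b.linearIndependent
    have h2 := this.map' (logDer α).subtype (Submodule.ker_subtype _)
    exact h2
  have hdet0 : M.det ≠ 0 := hap_det_ne_zero M hli
  -- defPoly basics
  have hQhom : (defPoly α).IsHomogeneous n := by
    have := MvPolynomial.IsHomogeneous.prod Finset.univ α (fun _ => 1) fun i _ => hh i
    simpa [defPoly] using this
  have hQne : defPoly α ≠ 0 := by
    unfold defPoly
    rw [Finset.prod_ne_zero_iff]
    exact fun i _ => h0 i
  -- Q divides det M
  have hQdet : defPoly α ∣ M.det :=
    hap_prod_dvd hpr hnd fun k => hap_alpha_dvd_det hh M hMlog k (h0 k)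
  obtain ⟨h, hMQ⟩ := hQdet
  have hhne : h ≠ 0 := by rintro rfl; rw [mul_zero] at hMQ; exact hdet0 hMQ
  -- N matrix with N * M = Q • 1
  have hQe : ∀ j : Fin (m + 1),
      (fun s => defPoly α * (if s = j then 1 else 0)) ∈ logDer α := by
    intro j i
    have hDA : derApply (fun s => defPoly α * (if s = j then 1 else 0)) (α i)
        = defPoly α * pderiv j (α i) := by
      unfold derApply
      rw [Finset.sum_eq_single j]
      · dsimp only
        rw [if_pos rfl, mul_one]
      · intro s _ hs
        dsimp only
        rw [if_neg hs, mul_zero, zero_mul]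
      · intro hj; exact absurd (Finset.mem_univ j) hj
    rw [hDA]
    exact Dvd.dvd.mul_right (Finset.dvd_prod_of_mem α (Finset.mem_univ i)) _
  set N : Matrix (Fin (m + 1)) (Fin (m + 1)) (MvPolynomial (Fin (m + 1)) F) :=
    Matrix.of (fun j u => b.repr ⟨_, hQe j⟩ u) with hN
  have hNM : N * M = (defPoly α) • (1 : Matrix (Fin (m + 1)) (Fin (m + 1)) (MvPolynomial (Fin (m + 1)) F)) := by
    refine Matrix.ext fun j s => ?_
    rw [Matrix.mul_apply]
    simp only [hN, hM, Matrix.of_apply]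
    rw [congrFun (hap_basis_repr_eq b _ (hQe j)).symm s]
    rw [Matrix.smul_apply, Matrix.one_apply, smul_eq_mul]
    by_cases hjs : s = j
    · subst hjs; simp
    · rw [if_neg hjs, if_neg (Ne.symm hjs)]
  have hdetNM : N.det * M.det = defPoly α ^ (m + 1) := by
    rw [← Matrix.det_mul, hNM, Matrix.det_smul, Matrix.det_one, mul_one, Fintype.card_fin]
  -- the square-free-ness of det M at each α k
  have notsq : ∀ k, ¬ (α k * α k ∣ M.det) := by
    intro k hsq
    obtain ⟨j₀, hj₀⟩ := hap_exists_pivot (hh k) (h0 k)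
    set a : Fin (m + 1) → F := fun j => coeff (Finsupp.single j 1) (α k) with ha
    set P : MvPolynomial (Fin (m + 1)) F := ∏ t ∈ Finset.univ.erase k, α t with hP
    set Θ : Matrix (Fin (m + 1)) (Fin (m + 1)) (MvPolynomial (Fin (m + 1)) F) := Matrix.of (fun t s =>
      if t = j₀ then (if s = j₀ then α k else 0)
      else (if s = t then C (a j₀) else if s = j₀ then - C (a t) else 0)) with hΘ
    -- the rows P • Θ t are logarithmic derivations
    have hrow : ∀ t, (fun s => P * Θ t s) ∈ logDer α := by
      intro t i
      have hfact : derApply (fun s => P * Θ t s) (α i)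
          = P * derApply (fun s => Θ t s) (α i) := by
        unfold derApply
        rw [Finset.mul_sum]
        exact Finset.sum_congr rfl fun s _ => by ring
      rw [hfact]
      rcases eq_or_ne i k with rfl | hik
      · refine Dvd.dvd.mul_left ?_ P
        have hcomp : derApply (fun s => Θ t s) (α i) = ∑ s, Θ t s * C (a s) := by
          unfold derApply
          exact Finset.sum_congr rfl fun s _ => by
            rw [hap_pderiv_homog_one (hh i) s]
        rw [hcomp]
        rcases eq_or_ne t j₀ with htj | ht
        · rw [Finset.sum_eq_single j₀]
          · show α i ∣ Θ t j₀ * C (a j₀)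
            rw [hΘ]
            show α i ∣ (if t = j₀ then (if j₀ = j₀ then α i else 0)
              else (if j₀ = t then C (a j₀) else if j₀ = j₀ then - C (a t) else 0)) * C (a j₀)
            rw [if_pos htj, if_pos rfl]
            exact Dvd.intro _ rfl
          · intro s _ hs
            show Θ t s * C (a s) = 0
            rw [hΘ]
            show (if t = j₀ then (if s = j₀ then α i else 0)
              else (if s = t then C (a j₀) else if s = j₀ then - C (a t) else 0)) * C (a s) = 0
            rw [if_pos htj, if_neg hs, zero_mul]
          · intro hj; exact absurd (Finset.mem_univ j₀) hj
        · have hzero : (∑ s, Θ t s * C (a s)) = 0 := by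
            have hsub : ({t, j₀} : Finset (Fin (m + 1))) ⊆ Finset.univ :=
              Finset.subset_univ _
            rw [← Finset.sum_subset hsub]
            · rw [Finset.sum_pair ht]
              have h1 : Θ t t = C (a j₀) := by
                rw [hΘ]
                show (if t = j₀ then _ else (if t = t then C (a j₀) else _)) = C (a j₀)
                rw [if_neg ht, if_pos rfl]
              have h2 : Θ t j₀ = - C (a t) := by
                rw [hΘ]
                show (if t = j₀ then _ else (if j₀ = t then C (a j₀) else
                  if j₀ = j₀ then - C (a t) else 0)) = - C (a t)
                rw [if_neg ht, if_neg (Ne.symm ht), if_pos rfl]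
              rw [h1, h2]
              ring
            · intro s _ hs
              have hst : s ≠ t := fun h' => hs (by rw [h']; exact Finset.mem_insert_self t {j₀})
              have hsj : s ≠ j₀ := fun h' => hs (by
                rw [h']
                exact Finset.mem_insert_of_mem (Finset.mem_singleton_self j₀))
              show Θ t s * C (a s) = 0
              rw [hΘ]
              show (if t = j₀ then (if s = j₀ then α i else 0) else
                (if s = t then C (a j₀) else if s = j₀ then - C (a t) else 0)) * C (a s) = 0
              rw [if_neg ht, if_neg hst, if_neg hsj, zero_mul]
          rw [hzero]
          exact dvd_zero _
      · refine Dvd.dvd.mul_right ?_ _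
        rw [hP]
        exact Finset.dvd_prod_of_mem α (Finset.mem_erase.mpr ⟨hik, Finset.mem_univ i⟩)
    -- express rows in terms of the basis
    set N' : Matrix (Fin (m + 1)) (Fin (m + 1)) (MvPolynomial (Fin (m + 1)) F) :=
      Matrix.of (fun t u => b.repr ⟨_, hrow t⟩ u) with hN'
    have hmat : Matrix.of (fun t s => P * Θ t s) = N' * M := by
      refine Matrix.ext fun t s => ?_
      rw [Matrix.mul_apply]
      simp only [hN', hM, Matrix.of_apply]
      exact congrFun (hap_basis_repr_eq b _ (hrow t)) s
    have hdetP : (Matrix.of (fun t s => P * Θ t s)).det = P ^ (m + 1) * Θ.det := by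
      have hsmul : Matrix.of (fun t s => P * Θ t s) = P • Θ := by
        refine Matrix.ext fun t s => ?_
        rw [Matrix.smul_apply, smul_eq_mul]
        rfl
      rw [hsmul, Matrix.det_smul, Fintype.card_fin]
    -- compute Θ.det
    set τ : Equiv.Perm (Fin (m + 1)) := Equiv.swap 0 j₀ with hτ
    have hτ0 : τ 0 = j₀ := Equiv.swap_apply_left 0 j₀
    have hdetΘ : Θ.det = α k * C (a j₀) ^ m := by
      rw [← Matrix.det_submatrix_equiv_self τ Θ]
      rw [Matrix.det_succ_row_zero]
      rw [Finset.sum_eq_single 0]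
      · have he : (Θ.submatrix τ τ) 0 0 = α k := by
          show Θ (τ 0) (τ 0) = α k
          rw [hτ0, hΘ]
          show (if j₀ = j₀ then (if j₀ = j₀ then α k else 0) else _) = α k
          rw [if_pos rfl, if_pos rfl]
        have hminor : ((Θ.submatrix τ τ).submatrix Fin.succ (Fin.succAbove 0)).det
            = C (a j₀) ^ m := by
          have hdiag : (Θ.submatrix τ τ).submatrix Fin.succ (Fin.succAbove 0)
              = Matrix.diagonal (fun _ => C (a j₀)) := by
            refine Matrix.ext fun i j => ?_
            show Θ (τ i.succ) (τ (Fin.succAbove 0 j)) = _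
            have hsa : Fin.succAbove (0 : Fin (m + 1)) j = j.succ := rfl
            rw [hsa]
            have hins : τ i.succ ≠ j₀ := by
              rw [← hτ0]
              intro hcon
              exact (Fin.succ_ne_zero i) (τ.injective hcon)
            have hjns : τ j.succ ≠ j₀ := by
              rw [← hτ0]
              intro hcon
              exact (Fin.succ_ne_zero j) (τ.injective hcon)
            rw [hΘ]
            show (if τ i.succ = j₀ then _ else (if τ j.succ = τ i.succ then C (a j₀)
              else if τ j.succ = j₀ then _ else 0)) = Matrix.diagonal (fun _ => C (a j₀)) i j
            rw [if_neg hins]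
            rcases eq_or_ne i j with rfl | hij
            · rw [if_pos rfl, Matrix.diagonal_apply_eq]
            · rw [if_neg (fun hcon => hij (Fin.succ_injective _ (τ.injective hcon)).symm),
                if_neg hjns, Matrix.diagonal_apply_ne _ hij]
          rw [hdiag, Matrix.det_diagonal]
          rw [Finset.prod_const]
          congr 1
          simp
        rw [he, hminor]
        simp
      · intro j _ hj
        have hz : (Θ.submatrix τ τ) 0 j = 0 := by
          show Θ (τ 0) (τ j) = 0
          rw [hτ0, hΘ]
          show (if j₀ = j₀ then (if τ j = j₀ then α k else 0) else _) = 0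
          rw [if_pos rfl, if_neg, ]
          rw [← hτ0]
          exact fun hcon => hj (τ.injective hcon)
        rw [hz]
        ring
      · intro hj; exact absurd (Finset.mem_univ 0) hj
    -- conclude
    have hdvd2 : M.det ∣ P ^ (m + 1) * (α k * C (a j₀) ^ m) := by
      rw [← hdetΘ, ← hdetP, hmat, Matrix.det_mul]
      exact dvd_mul_left _ _
    have hsq2 : α k * α k ∣ α k * (P ^ (m + 1) * C (a j₀) ^ m) := by
      have := dvd_trans hsq hdvd2
      have heq : P ^ (m + 1) * (α k * C (a j₀) ^ m)
          = α k * (P ^ (m + 1) * C (a j₀) ^ m) := by ring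
      rwa [heq] at this
    have hsq3 : α k ∣ P ^ (m + 1) * C (a j₀) ^ m :=
      (mul_dvd_mul_iff_left (h0 k)).mp hsq2
    rcases (hpr k).2.2 _ _ hsq3 with hc | hc
    · have := (hpr k).dvd_of_dvd_pow hc
      obtain ⟨t, htmem, htdvd⟩ := (hpr k).exists_mem_finset_dvd this
      exact hnd k t (Ne.symm (Finset.mem_erase.mp htmem).1) htdvd
    · have := (hpr k).dvd_of_dvd_pow hc
      have hCunit : IsUnit (C (a j₀) : MvPolynomial (Fin (m + 1)) F) :=
        (isUnit_iff_ne_zero.mpr hj₀).map (C : F →+* MvPolynomial (Fin (m + 1)) F)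
      exact (hpr k).not_unit (isUnit_of_dvd_unit this hCunit)
  -- h is a unit
  have hhu : IsUnit h := by
    by_contra hnu
    obtain ⟨q, hqirr, hqdvd⟩ := WfDvdMonoid.exists_irreducible_factor hnu hhne
    have hqprime : Prime q := (UniqueFactorizationMonoid.irreducible_iff_prime).mp hqirr
    have hql : q ∣ defPoly α ^ (m + 1) := by
      rw [← hdetNM]
      exact dvd_mul_of_dvd_right (dvd_trans hqdvd (Dvd.intro_left _ hMQ.symm)) _
    have : q ∣ ∏ k, α k ^ (m + 1) := by
      unfold defPoly at hql
      rwa [← Finset.prod_pow] at hql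
    obtain ⟨k, _, hk⟩ := hqprime.exists_mem_finset_dvd this
    have hqa : q ∣ α k := hqprime.dvd_of_dvd_pow hk
    have hassoc : Associated q (α k) := (hqprime.associated_of_dvd (hpr k)) hqa
    have hak_h : α k ∣ h := hassoc.symm.dvd.trans hqdvd
    apply notsq k
    rw [hMQ]
    exact mul_dvd_mul (Finset.dvd_prod_of_mem α (Finset.mem_univ k)) hak_h
  -- degree count
  have hdethom : M.det.IsHomogeneous (∑ i, e i) :=
    hap_det_homog M e fun i j => hbe i j
  have hhhom : h.IsHomogeneous ((∑ i, e i) - n) := by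
    refine hap_homog_of_mul_homog hQhom hQne ?_
    rw [← hMQ]
    exact hdethom
  have hdeg0 : (∑ i, e i) - n = 0 := by
    obtain ⟨k', hk'⟩ := IsUnit.exists_right_inv hhu
    have hk'hom : k'.IsHomogeneous (0 - ((∑ i, e i) - n)) := by
      refine hap_homog_of_mul_homog hhhom hhne ?_
      rw [hk']
      exact MvPolynomial.isHomogeneous_one _ _
    have hone : ((h * k') : MvPolynomial (Fin (m + 1)) F).IsHomogeneous
        (((∑ i, e i) - n) + (0 - ((∑ i, e i) - n))) := hhhom.mul hk'hom
    have h1 : ((1 : MvPolynomial (Fin (m + 1)) F)).IsHomogeneous 0 :=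
      MvPolynomial.isHomogeneous_one _ _
    rw [hk'] at hone
    have := MvPolynomial.IsHomogeneous.inj_right hone h1 one_ne_zero
    omega
  have hQh : (defPoly α * h).IsHomogeneous n := by
    have : h.IsHomogeneous 0 := by rwa [hdeg0] at hhhom
    have h2 := hQhom.mul this
    rwa [add_zero] at h2
  rw [hMQ] at hdethom hdet0
  exact MvPolynomial.IsHomogeneous.inj_right hdethom hQh hdet0

end SaitoConverse


section SaitoSufficiency

variable {F : Type*} [Field F] {l n : ℕ}

lemma hap_saito_sufficiency {α : Fin n → MvPolynomial (Fin l) F}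
    (hh : ∀ i, (α i).IsHomogeneous 1) (h0 : ∀ i, α i ≠ 0)
    (hnd : ∀ i j, i ≠ j → ¬ α i ∣ α j)
    (δ : Fin l → Fin l → MvPolynomial (Fin l) F)
    (hδ : ∀ i, δ i ∈ logDer α)
    (c : F) (hc : c ≠ 0)
    (hdet : (Matrix.of fun i j => δ i j).det = C c * defPoly α) :
    ∃ b : Module.Basis (Fin l) (MvPolynomial (Fin l) F) (logDer α),
      ∀ i, (b i : Fin l → MvPolynomial (Fin l) F) = δ i := by
  classical
  have hpr : ∀ i, Prime (α i) := fun i => hap_prime_homog_one (hh i) (h0 i)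
  have hQne : defPoly α ≠ 0 := by
    unfold defPoly
    rw [Finset.prod_ne_zero_iff]
    exact fun i _ => h0 i
  have hCc : (C c : MvPolynomial (Fin l) F) ≠ 0 := fun hC => by
    apply hc
    have := (MvPolynomial.C_injective (Fin l) F)
    exact this (by rw [hC, map_zero])
  set M : Matrix (Fin l) (Fin l) (MvPolynomial (Fin l) F) := Matrix.of fun i j => δ i j with hM
  have hdet0 : M.det ≠ 0 := by
    rw [hdet]
    exact mul_ne_zero hCc hQne
  -- linear independence
  have hli : LinearIndependent (MvPolynomial (Fin l) F) δ := by
    rw [Fintype.linearIndependent_iff]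
    intro g hg
    by_contra hcon
    push_neg at hcon
    obtain ⟨i0, hi0⟩ := hcon
    have hgne : g ≠ 0 := fun hz => hi0 (by rw [hz]; rfl)
    have hvm : Matrix.vecMul g M = 0 := by
      funext j
      have := congrFun hg j
      rw [Finset.sum_apply] at this
      simpa [Matrix.vecMul, dotProduct, hM] using this
    have : M.det = 0 := Matrix.exists_vecMul_eq_zero_iff.mp ⟨g, hgne, hvm⟩
    exact hdet0 this
  -- spanning
  have hspan : ∀ (x : Fin l → MvPolynomial (Fin l) F), x ∈ logDer α →
      x ∈ Submodule.span (MvPolynomial (Fin l) F) (Set.range δ) := by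
    intro x hx
    set w := Matrix.cramer M.transpose x with hw
    have hwdvd : ∀ i, defPoly α ∣ w i := by
      intro i
      rw [hw, Matrix.cramer_apply]
      rw [Matrix.updateCol_transpose, Matrix.det_transpose]
      refine hap_prod_dvd hpr hnd fun k => hap_alpha_dvd_det hh _ ?_ k (h0 k)
      intro t
      by_cases hti : t = i
      · subst hti
        show (fun j => (M.updateRow t x) t j) ∈ logDer α
        rw [Matrix.updateRow_self]
        exact hx
      · show (fun j => (M.updateRow i x) t j) ∈ logDer α
        rw [Matrix.updateRow_ne hti]
        exact hδ t
    choose u hu using hwdvd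
    have hcramer := Matrix.mulVec_cramer M.transpose x
    rw [Matrix.det_transpose, hdet] at hcramer
    have hx2 : x = ∑ i, (C c⁻¹ * u i) • δ i := by
      funext j
      have hj := congrFun hcramer j
      have hlhs : (M.transpose.mulVec w) j = ∑ i, M i j * (defPoly α * u i) := by
        show ∑ i, M.transpose j i * w i = _
        refine Finset.sum_congr rfl fun i _ => ?_
        rw [Matrix.transpose_apply, hu i]
      rw [hlhs] at hj
      have hrhs : ((C c * defPoly α) • x) j = defPoly α * (C c * x j) := by
        rw [Pi.smul_apply, smul_eq_mul]
        ring
      rw [hrhs] at hj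
      have hlhs2 : ∑ i, M i j * (defPoly α * u i) = defPoly α * ∑ i, M i j * u i := by
        rw [Finset.mul_sum]
        exact Finset.sum_congr rfl fun i _ => by ring
      rw [hlhs2] at hj
      have hcancel : ∑ i, M i j * u i = C c * x j := mul_left_cancel₀ hQne hj
      rw [Finset.sum_apply]
      have : ∑ i, ((C c⁻¹ * u i) • δ i) j = C c⁻¹ * ∑ i, M i j * u i := by
        rw [Finset.mul_sum]
        refine Finset.sum_congr rfl fun i _ => ?_
        rw [Pi.smul_apply, smul_eq_mul]
        show C c⁻¹ * u i * δ i j = C c⁻¹ * (δ i j * u i)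
        ring
      rw [this, hcancel, ← mul_assoc, ← C_mul, inv_mul_cancel₀ hc, C_1, one_mul]
    rw [hx2]
    exact Submodule.sum_mem _ fun i _ =>
      Submodule.smul_mem _ _ (Submodule.subset_span ⟨i, rfl⟩)
  -- build the basis
  set fam : Fin l → (logDer α) := fun i => ⟨δ i, hδ i⟩ with hfam
  have hli' : LinearIndependent (MvPolynomial (Fin l) F) fam := by
    apply LinearIndependent.of_comp (logDer α).subtype
    convert hli
    rfl
  have hsp : ⊤ ≤ Submodule.span (MvPolynomial (Fin l) F) (Set.range fam) := by
    intro z _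
    have hz : (z : Fin l → MvPolynomial (Fin l) F)
        ∈ Submodule.span (MvPolynomial (Fin l) F) (Set.range δ) := hspan z z.2
    have hmap : Submodule.map (logDer α).subtype
        (Submodule.span (MvPolynomial (Fin l) F) (Set.range fam))
        = Submodule.span (MvPolynomial (Fin l) F) (Set.range δ) := by
      rw [Submodule.map_span]
      congr 1
      ext y
      constructor
      · rintro ⟨y', ⟨i, rfl⟩, rfl⟩
        exact ⟨i, rfl⟩
      · rintro ⟨i, rfl⟩
        exact ⟨fam i, ⟨i, rfl⟩, rfl⟩
    rw [← hmap] at hz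
    obtain ⟨y, hy, hyz⟩ := hz
    have hyz' : y = z := Subtype.ext hyz
    exact hyz' ▸ hy
  refine ⟨Module.Basis.mk hli' hsp, fun i => ?_⟩
  rw [Module.Basis.mk_apply]

end SaitoSufficiency


lemma hap_ker_modP {l : ℕ} (p : ℕ) (f : MvPolynomial (Fin l) ℤ) (h : modP p f = 0) :
    ∃ g, f = (p : MvPolynomial (Fin l) ℤ) * g := by
  have hmem : f ∈ RingHom.ker (MvPolynomial.map (Int.castRingHom (ZMod p)) :
      MvPolynomial (Fin l) ℤ →+* MvPolynomial (Fin l) (ZMod p)) := RingHom.mem_ker.mpr h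
  rw [MvPolynomial.ker_map] at hmem
  have hker : RingHom.ker (Int.castRingHom (ZMod p)) = Ideal.span {(p : ℤ)} := by
    ext x
    rw [RingHom.mem_ker, Ideal.mem_span_singleton]
    exact ZMod.intCast_zmod_eq_zero_iff_dvd x p
  rw [hker, Ideal.map_span, Set.image_singleton, Ideal.mem_span_singleton] at hmem
  obtain ⟨g, hg⟩ := hmem
  refine ⟨g, ?_⟩
  rw [← map_natCast (C : ℤ →+* MvPolynomial (Fin l) ℤ) p]
  exact hg

/-- **From characteristic `p` to characteristic `0`.** Let `p` be a good prime for `A`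
not dividing `n` and a non-zero divisor on `ℤ[x_1,…,x_l]/J(A)_ℤ`. If `A_p` is free in
`𝔽_p^l` with exponents `(e_1, …, e_l)`, then `A` is free in `ℚ^l` with the same
exponents. -/
theorem isFree_of_isFree_modP {l n : ℕ} (α : Fin n → MvPolynomial (Fin l) ℤ)
    (hA : IsIntegralArrangement α) (p : ℕ) (hgood : IsGoodPrime α p)
    (hnd : ¬ (p ∣ n))
    (hnzd : ∀ f : MvPolynomial (Fin l) ℤ,
      (p : MvPolynomial (Fin l) ℤ) * f ∈ jacobianIdealZ α → f ∈ jacobianIdealZ α)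
    (e : Fin l → ℕ) (hfree : IsFreeWithExponents (fun i => modP p (α i)) e) :
    IsFreeWithExponents (fun i => MvPolynomial.map (Int.castRingHom ℚ) (α i)) e := by
  classical
  obtain ⟨hp, hsf⟩ := hgood
  haveI := Fact.mk hp
  set π := Int.castRingHom (ZMod p) with hπdef
  set ρ := Int.castRingHom ℚ with hρdef
  set αp : Fin n → MvPolynomial (Fin l) (ZMod p) := fun i => modP p (α i) with hαpdef
  set αq : Fin n → MvPolynomial (Fin l) ℚ := fun i => MvPolynomial.map ρ (α i) with hαqdef
  obtain ⟨bbar, hbbar⟩ := hfree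
  -- basic facts mod p
  have hhp : ∀ i, (αp i).IsHomogeneous 1 := fun i => (hA.homog i).map _
  have hQp : defPoly αp = modP p (defPoly α) := hap_defPoly_map _ α
  have hsfQ : Squarefree (defPoly αp) := by rw [hQp]; exact hsf
  have hQpne : defPoly αp ≠ 0 := by
    intro hz
    rw [hz] at hsfQ
    exact not_squarefree_zero hsfQ
  have h0p : ∀ i, αp i ≠ 0 := by
    intro i hzero
    apply hQpne
    unfold defPoly
    exact Finset.prod_eq_zero (Finset.mem_univ i) hzero
  have hndp : ∀ i j, i ≠ j → ¬ αp i ∣ αp j := by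
    intro i j hij hdvd
    have h2 : αp i * αp j ∣ defPoly αp := by
      have hsub : ({i, j} : Finset (Fin n)) ⊆ Finset.univ := Finset.subset_univ _
      have hpp := Finset.prod_dvd_prod_of_subset _ _ αp hsub
      rwa [Finset.prod_pair hij] at hpp
    have h3 : αp i * αp i ∣ defPoly αp := dvd_trans (mul_dvd_mul_left _ hdvd) h2
    exact (hap_prime_homog_one (hhp i) (h0p i)).not_unit (hsfQ _ h3)
  -- basic facts over ℚ
  have hinj : Function.Injective (MvPolynomial.map ρ :
      MvPolynomial (Fin l) ℤ → MvPolynomial (Fin l) ℚ) :=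
    MvPolynomial.map_injective ρ Int.cast_injective
  have hhq : ∀ i, (αq i).IsHomogeneous 1 := fun i => (hA.homog i).map _
  have h0q : ∀ i, αq i ≠ 0 := by
    intro i hzero
    exact hA.nonzero i (hinj (by rw [map_zero]; exact hzero))
  have hndq : ∀ i j, i ≠ j → ¬ αq i ∣ αq j := by
    intro i j hij hdvd
    obtain ⟨u, hu⟩ := hdvd
    have hu1 : (αq i * u).IsHomogeneous 1 := hu ▸ hhq j
    have hu0 : u.IsHomogeneous 0 := by
      have := hap_homog_of_mul_homog (hhq i) (h0q i) hu1
      simpa using this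
    have huC : u = C (coeff 0 u) := hap_homog_zero_eq_C hu0
    apply hA.distinct j i (Ne.symm hij) (coeff 0 u)
    rw [MvPolynomial.smul_eq_C_mul]
    show αq j = C (coeff 0 u) * αq i
    rw [hu]
    conv_lhs => rw [huC]
    ring
  have hprq : ∀ i, Prime (αq i) := fun i => hap_prime_homog_one (hhq i) (h0q i)
  have hQqhom : (defPoly αq).IsHomogeneous n := by
    have := MvPolynomial.IsHomogeneous.prod Finset.univ αq (fun _ => 1) fun i _ => hhq i
    simpa [defPoly] using this
  have hQqne : defPoly αq ≠ 0 := by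
    unfold defPoly
    rw [Finset.prod_ne_zero_iff]
    exact fun i _ => h0q i
  -- lift the mod-p basis rows
  have hsurj : Function.Surjective (MvPolynomial.map π :
      MvPolynomial (Fin l) ℤ → MvPolynomial (Fin l) (ZMod p)) :=
    MvPolynomial.map_surjective _ ZMod.intCast_surjective
  set δbar : Fin l → Fin l → MvPolynomial (Fin l) (ZMod p) :=
    fun i => (bbar i : Fin l → MvPolynomial (Fin l) (ZMod p)) with hδbardef
  have hθex : ∀ (i j : Fin l), ∃ y, MvPolynomial.map π y = δbar i j := fun i j => hsurj _
  choose θ hθ using hθex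
  have hkey : ∀ i : Fin l, ∃ δ' : Fin l → MvPolynomial (Fin l) ℤ,
      (∀ j, MvPolynomial.map π (δ' j) = δbar i j) ∧
      ∃ g', derApply δ' (defPoly α) = g' * defPoly α := by
    intro i
    obtain ⟨gbar, hgbar⟩ := hap_defPoly_dvd_derApply αp (bbar i).2
    obtain ⟨g, hg⟩ := hsurj gbar
    have hmod : modP p (derApply (θ i) (defPoly α) - g * defPoly α) = 0 := by
      show MvPolynomial.map π (derApply (θ i) (defPoly α) - g * defPoly α) = 0
      rw [map_sub, map_mul, ← hap_derApply_map π (θ i) (defPoly α)]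
      have h1 : (fun j => MvPolynomial.map π (θ i j)) = δbar i := funext fun j => hθ i j
      rw [h1, hg]
      have h2 : MvPolynomial.map π (defPoly α) = defPoly αp := hQp.symm
      rw [h2, hgbar]
      ring
    obtain ⟨h1, hh1⟩ := hap_ker_modP p _ hmod
    have hJ : (p : MvPolynomial (Fin l) ℤ) * h1 ∈ jacobianIdealZ α := by
      rw [← hh1]
      apply Ideal.sub_mem
      · unfold derApply
        apply Ideal.sum_mem
        intro j _
        apply Ideal.mul_mem_left
        apply Ideal.subset_span
        exact Set.mem_union_right _ ⟨j, rfl⟩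
      · apply Ideal.mul_mem_left
        exact Ideal.subset_span (Set.mem_union_left _ rfl)
    have hJ2 := hnzd h1 hJ
    unfold jacobianIdealZ at hJ2
    rw [Set.singleton_union, Ideal.mem_span_insert] at hJ2
    obtain ⟨aco, z, hz, hzeq⟩ := hJ2
    obtain ⟨cvec, hcvec⟩ := (Submodule.mem_span_range_iff_exists_fun _).mp hz
    refine ⟨fun j => θ i j - (p : MvPolynomial (Fin l) ℤ) * cvec j, ?_, ?_⟩
    · intro j
      have hp0 : MvPolynomial.map π ((p : MvPolynomial (Fin l) ℤ)) = 0 := by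
        rw [map_natCast]
        rw [show ((p : MvPolynomial (Fin l) (ZMod p)))
            = C ((p : ZMod p)) from (map_natCast (C : ZMod p →+* _) p).symm]
        rw [ZMod.natCast_self, map_zero]
      rw [map_sub, map_mul, hp0, zero_mul, sub_zero, hθ i j]
    · refine ⟨g + (p : MvPolynomial (Fin l) ℤ) * aco, ?_⟩
      have hda : derApply (fun j => θ i j - (p : MvPolynomial (Fin l) ℤ) * cvec j) (defPoly α)
          = derApply (θ i) (defPoly α)
            - (p : MvPolynomial (Fin l) ℤ) * ∑ j, cvec j * pderiv j (defPoly α) := by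
        unfold derApply
        rw [Finset.mul_sum, ← Finset.sum_sub_distrib]
        exact Finset.sum_congr rfl fun j _ => by ring
      have hθQ : derApply (θ i) (defPoly α)
          = g * defPoly α + (p : MvPolynomial (Fin l) ℤ) * h1 := by
        have := sub_eq_iff_eq_add.mp hh1
        rw [this]
        ring
      have hz2 : ∑ j, cvec j * pderiv j (defPoly α) = z := by
        rw [← hcvec]
        exact Finset.sum_congr rfl fun j _ => by rw [smul_eq_mul]
      rw [hda, hθQ, hz2, hzeq]
      ring
  choose δ' hδmod hδQ using hkey
  -- homogeneous components of the lifts reduce to the basis rows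
  have hmodδ'' : ∀ i j, MvPolynomial.map π (homogeneousComponent (e i) (δ' i j)) = δbar i j := by
    intro i j
    rw [← hap_hc_map π (e i) (δ' i j), hδmod i j]
    have hoc := homogeneousComponent_of_mem (m := e i)
      ((mem_homogeneousSubmodule _ _).mpr (hbbar i j))
    rw [hoc, if_pos rfl]
  -- the ℚ rows are logarithmic
  have hδq_log : ∀ i, (fun j => MvPolynomial.map ρ (δ' i j)) ∈ logDer αq := by
    intro i
    apply hap_mem_logDer_of_dvd hprq hndq
    obtain ⟨g', hg'⟩ := hδQ i
    have hQmap : defPoly αq = MvPolynomial.map ρ (defPoly α) := hap_defPoly_map ρ α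
    rw [hQmap, hap_derApply_map ρ (δ' i) (defPoly α), hg', map_mul]
    exact Dvd.intro_left _ rfl
  have hδq''_log : ∀ i,
      (fun j => MvPolynomial.map ρ (homogeneousComponent (e i) (δ' i j))) ∈ logDer αq := by
    intro i
    have hcomp := hap_logDer_component hhq (hδq_log i) (e i)
    have hfun : (fun j => MvPolynomial.map ρ (homogeneousComponent (e i) (δ' i j)))
        = fun j => homogeneousComponent (e i) (MvPolynomial.map ρ (δ' i j)) :=
      funext fun j => (hap_hc_map ρ (e i) (δ' i j)).symm
    rw [hfun]
    exact hcomp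
  -- matrices
  set MZ : Matrix (Fin l) (Fin l) (MvPolynomial (Fin l) ℤ) :=
    Matrix.of (fun i j => homogeneousComponent (e i) (δ' i j)) with hMZdef
  set MQ : Matrix (Fin l) (Fin l) (MvPolynomial (Fin l) ℚ) :=
    Matrix.of (fun i j => MvPolynomial.map ρ (homogeneousComponent (e i) (δ' i j))) with hMQdef
  set Mbar : Matrix (Fin l) (Fin l) (MvPolynomial (Fin l) (ZMod p)) :=
    Matrix.of (fun i j => δbar i j) with hMbardef
  have hMQmap : MQ = MZ.map (MvPolynomial.map ρ) := by
    refine Matrix.ext fun i j => ?_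
    rfl
  have hMbarmap : Mbar = MZ.map (MvPolynomial.map π) := by
    refine Matrix.ext fun i j => ?_
    exact (hmodδ'' i j).symm
  have hdetMQ : MQ.det = MvPolynomial.map ρ MZ.det := by
    rw [hMQmap]
    exact ((MvPolynomial.map ρ).map_det MZ).symm
  have hdetMbar : Mbar.det = MvPolynomial.map π MZ.det := by
    rw [hMbarmap]
    exact ((MvPolynomial.map π).map_det MZ).symm
  -- det Mbar ≠ 0
  have hlibar : LinearIndependent (MvPolynomial (Fin l) (ZMod p)) (fun i => (fun j => Mbar i j)) := by
    have hb := bbar.linearIndependent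
    have h2 := hb.map' (logDer αp).subtype (Submodule.ker_subtype _)
    exact h2
  have hdetbar0 : Mbar.det ≠ 0 := hap_det_ne_zero Mbar hlibar
  have hdetMZ0 : MZ.det ≠ 0 := by
    intro hz
    apply hdetbar0
    rw [hdetMbar, hz, map_zero]
  have hdetMQ0 : MQ.det ≠ 0 := by
    intro hz
    apply hdetMZ0
    apply hinj
    rw [← hdetMQ, hz, map_zero]
  -- exponent sum
  have hsum : ∑ i, e i = n := hap_saito_converse hhp h0p hndp bbar e hbbar
  -- Q_ℚ divides det MQ
  have hrowsq : ∀ i, (fun j => MQ i j) ∈ logDer αq := fun i => hδq''_log i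
  have hQdvd : defPoly αq ∣ MQ.det :=
    hap_prod_dvd hprq hndq fun k => hap_alpha_dvd_det hhq MQ hrowsq k (h0q k)
  obtain ⟨hq, hqeq⟩ := hQdvd
  have hdetqhom : MQ.det.IsHomogeneous (∑ i, e i) :=
    hap_det_homog MQ e fun i j => (homogeneousComponent_isHomogeneous (e i) (δ' i j)).map ρ
  have hqhom : hq.IsHomogeneous 0 := by
    have := hap_homog_of_mul_homog hQqhom hQqne (hqeq ▸ hdetqhom)
    rwa [hsum, Nat.sub_self] at this
  have hqC : hq = C (coeff 0 hq) := hap_homog_zero_eq_C hqhom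
  have hqne : hq ≠ 0 := by
    rintro rfl
    rw [mul_zero] at hqeq
    exact hdetMQ0 hqeq
  have hcne : coeff 0 hq ≠ 0 := by
    intro hz
    apply hqne
    rw [hqC, hz, map_zero]
  -- Saito sufficiency over ℚ
  obtain ⟨bq, hbq⟩ := hap_saito_sufficiency hhq h0q hndq
    (fun i => fun j => MvPolynomial.map ρ (homogeneousComponent (e i) (δ' i j)))
    hδq''_log (coeff 0 hq) hcne
    (by
      show MQ.det = C (coeff 0 hq) * defPoly αq
      rw [hqeq, ← hqC]
      ring)
  refine ⟨bq, fun i => ?_⟩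
  rw [hbq i]
  intro j
  exact (homogeneousComponent_isHomogeneous (e i) (δ' i j)).map ρ

end HApaper
end
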